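/- arXiv:1811.08322 — 5 statements merged into one kernel-verified Lean document; each statement's English description precedes it below -/
import Mathlib

section
/- Let G be a strongly connected simple digraph on n vertices and 0 ≤ α < 1. Then min_i (α D_i + (1-α) T_i / D_i) ≤ μ_α(G) ≤ max_i (α D_i + (1-α) T_i / D_i), where T_i = ∑_t d_{it} D_t. -/
open Matrix BigOperators

/-- Spectral radius of a real square matrix: the largest modulus of its complex eigenvalues. -/
noncomputable def specRad {n : ℕ} (M : Matrix (Fin n) (Fin n) ℝ) : ℝ :=
  sSup {r : ℝ | ∃ μ ∈ spectrum ℂ (M.map (fun x => (x : ℂ))), r = ‖μ‖}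

/-- A matrix is irreducible iff its associated digraph is strongly connected. -/
def Irred {n : ℕ} (M : Matrix (Fin n) (Fin n) ℝ) : Prop :=
  ∀ i j : Fin n, Relation.ReflTransGen (fun a b => M a b ≠ 0) i j

/-- A directed walk of length `k` from `i` to `j` in a digraph. -/
def DWalk {n : ℕ} (G : Digraph (Fin n)) (i j : Fin n) (k : ℕ) : Prop :=
  ∃ f : ℕ → Fin n, f 0 = i ∧ f k = j ∧ ∀ l < k, G.Adj (f l) (f (l + 1))

/-- A digraph is strongly connected iff every vertex can reach every vertex. -/
def SConn {n : ℕ} (G : Digraph (Fin n)) : Prop :=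
  ∀ i j : Fin n, ∃ k : ℕ, DWalk G i j k

/-- A simple digraph has no loops. -/
def Loopless {n : ℕ} (G : Digraph (Fin n)) : Prop := ∀ i : Fin n, ¬ G.Adj i i

/-- Directed distance from `i` to `j`. -/
noncomputable def ddist {n : ℕ} (G : Digraph (Fin n)) (i j : Fin n) : ℕ :=
  sInf {k : ℕ | DWalk G i j k}

/-- Transmission of vertex `i`: sum of distances from `i` to all vertices. -/
noncomputable def transm {n : ℕ} (G : Digraph (Fin n)) (i : Fin n) : ℝ :=
  ∑ j : Fin n, (ddist G i j : ℝ)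

/-- The generalized distance matrix `D_α(G) = α·Diag(Tr) + (1-α)·D(G)`. -/
noncomputable def Dalpha {n : ℕ} (α : ℝ) (G : Digraph (Fin n)) : Matrix (Fin n) (Fin n) ℝ :=
  α • Matrix.diagonal (transm G) + (1 - α) • (Matrix.of fun i j => (ddist G i j : ℝ))

/-- The `D_α` spectral radius of a digraph. -/
noncomputable def mualpha {n : ℕ} (α : ℝ) (G : Digraph (Fin n)) : ℝ :=
  specRad (Dalpha α G)

/-- Isomorphism of digraphs on `Fin n`. -/
def IsoD {n : ℕ} (G H : Digraph (Fin n)) : Prop :=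
  ∃ e : Fin n ≃ Fin n, ∀ i j : Fin n, G.Adj i j ↔ H.Adj (e i) (e j)

/-- The digraph `K(n,k,m)`: vertices `0..k-1` form `K↔ₖ`, `k..k+m-1` form `K↔ₘ`,
`k+m..n-1` form `K↔_{n-k-m}`; all arcs present except those from `K↔_{n-k-m}` to `K↔ₘ`. -/
def KD (n k m : ℕ) : Digraph (Fin n) :=
  ⟨fun i j => i ≠ j ∧ ¬(k + m ≤ (i : ℕ) ∧ k ≤ (j : ℕ) ∧ (j : ℕ) < k + m)⟩

/-- A directed walk staying inside a vertex set `A`. -/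
def DWalkIn {n : ℕ} (G : Digraph (Fin n)) (A : Set (Fin n)) (i j : Fin n) (k : ℕ) : Prop :=
  ∃ f : ℕ → Fin n, f 0 = i ∧ f k = j ∧ (∀ l ≤ k, f l ∈ A) ∧ ∀ l < k, G.Adj (f l) (f (l + 1))

/-- The induced subdigraph on `A` is strongly connected. -/
def SCOn {n : ℕ} (G : Digraph (Fin n)) (A : Set (Fin n)) : Prop :=
  ∀ i ∈ A, ∀ j ∈ A, ∃ k : ℕ, DWalkIn G A i j k

section Aux

attribute [local instance] Matrix.linftyOpNormedRing Matrix.linftyOpNormedAlgebra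

lemma one_le_ddist {n : ℕ} {G : Digraph (Fin n)} (hsc : SConn G) {i j : Fin n} (h : i ≠ j) :
    1 ≤ ddist G i j := by
  rcases Nat.eq_zero_or_pos (ddist G i j) with h0 | h1
  · have hmem : ddist G i j ∈ {k : ℕ | DWalk G i j k} := Nat.sInf_mem (hsc i j)
    obtain ⟨f, hf0, hfk, -⟩ := hmem
    rw [h0] at hfk
    exact absurd (hf0 ▸ hfk : i = j) h
  · exact h1

lemma transm_pos {n : ℕ} (hn : 2 ≤ n) {G : Digraph (Fin n)} (hsc : SConn G) (i : Fin n) :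
    0 < transm G i := by
  obtain ⟨j, hj⟩ : ∃ j : Fin n, j ≠ i :=
    Fintype.exists_ne_of_one_lt_card (by simpa using by omega : 1 < Fintype.card (Fin n)) i
  have h1 : (1 : ℝ) ≤ (ddist G i j : ℝ) := by exact_mod_cast one_le_ddist hsc hj.symm
  calc (0:ℝ) < 1 := one_pos
    _ ≤ (ddist G i j : ℝ) := h1
    _ ≤ transm G i := Finset.single_le_sum (f := fun t => (ddist G i t : ℝ))
        (fun t _ => by positivity) (Finset.mem_univ j)

lemma Dalpha_mulVec {n : ℕ} (α : ℝ) (G : Digraph (Fin n)) (i : Fin n) :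
    ((Dalpha α G) *ᵥ (transm G)) i
      = α * transm G i * transm G i + (1 - α) * ∑ t : Fin n, (ddist G i t : ℝ) * transm G t := by
  rw [Dalpha, Matrix.add_mulVec, Matrix.smul_mulVec, Matrix.smul_mulVec]
  simp only [Pi.add_apply, Pi.smul_apply, smul_eq_mul, Matrix.mulVec_diagonal]
  rw [Matrix.mulVec, dotProduct]
  simp only [Matrix.of_apply]
  rw [Finset.mul_sum]
  congr 1
  · ring

theorem stmt3 {n : ℕ} (hn : 2 ≤ n) (G : Digraph (Fin n)) (hG : Loopless G) (hsc : SConn G)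
    (α : ℝ) (h0 : 0 ≤ α) (h1 : α < 1) :
    (⨅ i : Fin n, (α * transm G i +
        (1 - α) * (∑ t : Fin n, (ddist G i t : ℝ) * transm G t) / transm G i)) ≤ mualpha α G ∧
    mualpha α G ≤ (⨆ i : Fin n, (α * transm G i +
        (1 - α) * (∑ t : Fin n, (ddist G i t : ℝ) * transm G t) / transm G i)) := by
  haveI hne : Nonempty (Fin n) := ⟨⟨0, by omega⟩⟩
  haveI hcs : CompleteSpace (Matrix (Fin n) (Fin n) ℂ) := FiniteDimensional.complete ℂ _
  have h1α : (0:ℝ) < 1 - α := by linarith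
  have hx : ∀ i, 0 < transm G i := transm_pos hn hsc
  set q : Fin n → ℝ := fun i => α * transm G i +
      (1 - α) * (∑ t : Fin n, (ddist G i t : ℝ) * transm G t) / transm G i with hq_def
  set M : Matrix (Fin n) (Fin n) ℝ := Dalpha α G with hM_def
  set A : Matrix (Fin n) (Fin n) ℂ := M.map (fun x => (x : ℂ)) with hA_def
  have hT : ∀ i, 0 < ∑ t : Fin n, (ddist G i t : ℝ) * transm G t := by
    intro i
    obtain ⟨j, hj⟩ : ∃ j : Fin n, j ≠ i :=
      Fintype.exists_ne_of_one_lt_card (by simpa using by omega : 1 < Fintype.card (Fin n)) i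
    have hd : (1 : ℝ) ≤ (ddist G i j : ℝ) := by exact_mod_cast one_le_ddist hsc hj.symm
    calc (0:ℝ) < (ddist G i j : ℝ) * transm G j :=
          mul_pos (lt_of_lt_of_le one_pos hd) (hx j)
      _ ≤ _ := Finset.single_le_sum (f := fun t => (ddist G i t : ℝ) * transm G t)
          (fun t _ => mul_nonneg (Nat.cast_nonneg _) (hx t).le) (Finset.mem_univ j)
  have hq_pos : ∀ i, 0 < q i := by
    intro i
    have h2 : 0 < (1 - α) * (∑ t : Fin n, (ddist G i t : ℝ) * transm G t) / transm G i :=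
      div_pos (mul_pos h1α (hT i)) (hx i)
    have h3 : 0 ≤ α * transm G i := mul_nonneg h0 (hx i).le
    rw [hq_def]; dsimp only; linarith
  have hMx : ∀ i, (M *ᵥ transm G) i = q i * transm G i := by
    intro i
    rw [hM_def, Dalpha_mulVec, hq_def]
    dsimp only
    rw [add_mul, div_mul_cancel₀ _ (hx i).ne']
  have hM0 : ∀ i j, 0 ≤ M i j := by
    intro i j
    rw [hM_def]
    simp only [Dalpha, Matrix.add_apply, Matrix.smul_apply, Matrix.of_apply, smul_eq_mul,
      Matrix.diagonal_apply]
    split_ifs with h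
    · exact add_nonneg (mul_nonneg h0 (hx i).le) (mul_nonneg h1α.le (Nat.cast_nonneg _))
    · simpa using mul_nonneg h1α.le (Nat.cast_nonneg (ddist G i j) : (0:ℝ) ≤ _)
  have hmu : mualpha α G = sSup {r : ℝ | ∃ μ ∈ spectrum ℂ A, r = ‖μ‖} := rfl
  have hbdd : BddAbove {r : ℝ | ∃ μ ∈ spectrum ℂ A, r = ‖μ‖} := by
    refine ⟨‖A‖, ?_⟩
    rintro r ⟨μ, hμ, rfl⟩
    simpa using spectrum.norm_le_norm_of_mem hμ
  have hqb : BddAbove (Set.range q) := Set.Finite.bddAbove (Set.finite_range q)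
  have heig : ∀ μ ∈ spectrum ℂ A, ∃ v : Fin n → ℂ, v ≠ 0 ∧ A *ᵥ v = μ • v := by
    intro μ hμ
    rw [spectrum.mem_iff] at hμ
    have hdet : (algebraMap ℂ (Matrix (Fin n) (Fin n) ℂ) μ - A).det = 0 := by
      by_contra hd
      exact hμ ((Matrix.isUnit_iff_isUnit_det _).mpr (isUnit_iff_ne_zero.mpr hd))
    obtain ⟨v, hv0, hv⟩ := (Matrix.exists_mulVec_eq_zero_iff).mpr hdet
    refine ⟨v, hv0, ?_⟩
    rw [Matrix.sub_mulVec, Algebra.algebraMap_eq_smul_one, Matrix.smul_mulVec,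
      Matrix.one_mulVec, sub_eq_zero] at hv
    exact hv.symm
  -- UPPER BOUND
  have hupper : ∀ μ ∈ spectrum ℂ A, ‖μ‖ ≤ ⨆ i, q i := by
    intro μ hμ
    obtain ⟨v, hv0, hAv⟩ := heig μ hμ
    obtain ⟨i, -, hi⟩ := Finset.exists_max_image Finset.univ
      (fun j => ‖v j‖ / transm G j) Finset.univ_nonempty
    have hvle : ∀ j, ‖v j‖ ≤ (‖v i‖ / transm G i) * transm G j := by
      intro j
      have h2 := hi j (Finset.mem_univ j)
      calc ‖v j‖ = ‖v j‖ / transm G j * transm G j :=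
            (div_mul_cancel₀ _ (hx j).ne').symm
        _ ≤ _ := mul_le_mul_of_nonneg_right h2 (hx j).le
    have hvi : 0 < ‖v i‖ := by
      obtain ⟨j, hj⟩ := Function.ne_iff.mp hv0
      have h2 : 0 < ‖v j‖ / transm G j := div_pos (by simpa using hj) (hx j)
      have h3 : 0 < ‖v i‖ / transm G i := lt_of_lt_of_le h2 (hi j (Finset.mem_univ j))
      have h4 := mul_pos h3 (hx i)
      rwa [div_mul_cancel₀ _ (hx i).ne'] at h4
    have e1 : (A *ᵥ v) i = μ * v i := by rw [hAv]; rfl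
    have e2 : ‖μ * v i‖ ≤ ∑ j, M i j * ‖v j‖ := by
      rw [← e1]
      calc ‖∑ j, A i j * v j‖ ≤ ∑ j, ‖A i j * v j‖ :=
            norm_sum_le _ _
        _ = ∑ j, M i j * ‖v j‖ := Finset.sum_congr rfl fun j _ => by
            rw [norm_mul]
            congr 1
            rw [hA_def]
            simp [Matrix.map_apply, Complex.norm_real, abs_of_nonneg (hM0 i j)]
    have e3 : ∑ j, M i j * ‖v j‖
        ≤ (‖v i‖ / transm G i) * (q i * transm G i) := by
      calc ∑ j, M i j * ‖v j‖
          ≤ ∑ j, M i j * ((‖v i‖ / transm G i) * transm G j) :=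
            Finset.sum_le_sum fun j _ => mul_le_mul_of_nonneg_left (hvle j) (hM0 i j)
        _ = (‖v i‖ / transm G i) * ∑ j, M i j * transm G j := by
            rw [Finset.mul_sum]; exact Finset.sum_congr rfl fun j _ => by ring
        _ = (‖v i‖ / transm G i) * (q i * transm G i) := by rw [← hMx i]; rfl
    have e4 : (‖v i‖ / transm G i) * (q i * transm G i)
        = q i * ‖v i‖ := by
      calc (‖v i‖ / transm G i) * (q i * transm G i)
          = q i * (‖v i‖ / transm G i * transm G i) := by ring
        _ = q i * ‖v i‖ := by rw [div_mul_cancel₀ _ (hx i).ne']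
    have e5 : ‖μ‖ * ‖v i‖ ≤ q i * ‖v i‖ := by
      calc ‖μ‖ * ‖v i‖ = ‖μ * v i‖ := (norm_mul _ _).symm
        _ ≤ _ := e2
        _ ≤ _ := e3
        _ = _ := e4
    exact (le_of_mul_le_mul_right (by simpa [mul_comm] using e5) hvi).trans (le_ciSup hqb i)
  -- LOWER BOUND setup
  set c : ℝ := ⨅ i, q i with hc_def
  have hc_le : ∀ i, c ≤ q i := fun i => ciInf_le (Set.Finite.bddBelow (Set.finite_range q)) i
  obtain ⟨i0, hi0⟩ := Finite.exists_min q
  have hc_pos : 0 < c := lt_of_lt_of_le (hq_pos i0) (le_ciInf hi0)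
  have hMk0 : ∀ k : ℕ, ∀ i j, 0 ≤ (M ^ k) i j := by
    intro k
    induction k with
    | zero =>
      intro i j
      rw [pow_zero, Matrix.one_apply]
      split_ifs <;> norm_num
    | succ k ih =>
      intro i j
      rw [pow_succ, Matrix.mul_apply]
      exact Finset.sum_nonneg fun t _ => mul_nonneg (ih i t) (hM0 t j)
  have hck : ∀ k : ℕ, ∀ i, c ^ k * transm G i ≤ ((M ^ k) *ᵥ transm G) i := by
    intro k
    induction k with
    | zero => intro i; rw [pow_zero, pow_zero, one_mul, Matrix.one_mulVec]
    | succ k ih =>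
      intro i
      rw [show M ^ (k + 1) = M ^ k * M from pow_succ M k, ← Matrix.mulVec_mulVec]
      have step1 : ∀ j, c * transm G j ≤ (M *ᵥ transm G) j := by
        intro j
        rw [hMx j]
        exact mul_le_mul_of_nonneg_right (hc_le j) (hx j).le
      calc c ^ (k + 1) * transm G i = c * (c ^ k * transm G i) := by ring
        _ ≤ c * ((M ^ k) *ᵥ transm G) i :=
            mul_le_mul_of_nonneg_left (ih i) hc_pos.le
        _ = ∑ j, (M ^ k) i j * (c * transm G j) := by
            rw [Matrix.mulVec, dotProduct, Finset.mul_sum]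
            exact Finset.sum_congr rfl fun j _ => by ring
        _ ≤ ∑ j, (M ^ k) i j * (M *ᵥ transm G) j :=
            Finset.sum_le_sum fun j _ => mul_le_mul_of_nonneg_left (step1 j) (hMk0 k i j)
        _ = ((M ^ k) *ᵥ (M *ᵥ transm G)) i := rfl
  obtain ⟨imax, -, himax⟩ := Finset.exists_max_image Finset.univ (transm G) Finset.univ_nonempty
  have hrow : ∀ k : ℕ, c ^ k ≤ ∑ j, (M ^ k) imax j := by
    intro k
    have h2 : ∑ j, (M ^ k) imax j * transm G j ≤ (∑ j, (M ^ k) imax j) * transm G imax := by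
      rw [Finset.sum_mul]
      exact Finset.sum_le_sum fun j _ =>
        mul_le_mul_of_nonneg_left (himax j (Finset.mem_univ j)) (hMk0 k imax j)
    exact le_of_mul_le_mul_right ((hck k imax).trans h2) (hx imax)
  have hA_pow : ∀ k : ℕ, A ^ k = (M ^ k).map (fun r : ℝ => (r : ℂ)) := by
    intro k
    induction k with
    | zero =>
      rw [pow_zero, pow_zero]
      ext i j
      simp [Matrix.map_apply, Matrix.one_apply, apply_ite]
    | succ k ih =>
      rw [pow_succ, pow_succ, ih, hA_def]
      ext i j
      simp only [Matrix.mul_apply, Matrix.map_apply]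
      push_cast
      rfl
  have hnormk : ∀ k : ℕ, c ^ k ≤ ‖A ^ k‖ := by
    intro k
    have hb : (∑ j, ‖(A ^ k) imax j‖₊) ≤ ‖A ^ k‖₊ := by
      rw [Matrix.linfty_opNNNorm_def]
      exact Finset.le_sup (f := fun i => ∑ j, ‖(A ^ k) i j‖₊) (Finset.mem_univ imax)
    have hb' : (∑ j, ‖(A ^ k) imax j‖) ≤ ‖A ^ k‖ := by
      have h6 := NNReal.coe_le_coe.mpr hb
      rw [NNReal.coe_sum] at h6
      simpa [coe_nnnorm] using h6
    refine le_trans ?_ hb'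
    calc c ^ k ≤ ∑ j, (M ^ k) imax j := hrow k
      _ = ∑ j, ‖(A ^ k) imax j‖ := Finset.sum_congr rfl fun j _ => by
          rw [hA_pow k]
          simp only [Matrix.map_apply, Complex.norm_real]
          rw [Real.norm_of_nonneg (hMk0 k imax j)]
  have hsr : ENNReal.ofReal c ≤ spectralRadius ℂ A := by
    have hg := spectrum.pow_nnnorm_pow_one_div_tendsto_nhds_spectralRadius A
    refine ge_of_tendsto hg ?_
    filter_upwards [Filter.eventually_gt_atTop 0] with k hk
    have hk' : (k:ℝ) ≠ 0 := Nat.cast_ne_zero.mpr hk.ne'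
    have h5 : ENNReal.ofReal (c ^ k) ≤ (‖A ^ k‖₊ : ENNReal) := by
      rw [← ENNReal.ofReal_coe_nnreal, coe_nnnorm]
      exact ENNReal.ofReal_le_ofReal (hnormk k)
    calc ENNReal.ofReal c = (ENNReal.ofReal (c ^ k)) ^ ((k:ℝ)⁻¹) := by
          rw [ENNReal.ofReal_rpow_of_pos (pow_pos hc_pos k)]
          congr 1
          rw [← Real.rpow_natCast c k, ← Real.rpow_mul hc_pos.le,
            mul_inv_cancel₀ hk', Real.rpow_one]
      _ ≤ (‖A ^ k‖₊ : ENNReal) ^ ((k:ℝ)⁻¹) := ENNReal.rpow_le_rpow h5 (by positivity)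
      _ = (‖A ^ k‖₊ : ENNReal) ^ (1 / (k:ℝ)) := by rw [one_div]
  have hex : ∀ c' : ℝ, 0 ≤ c' → c' < c → ∃ μ ∈ spectrum ℂ A, c' < ‖μ‖ := by
    intro c' h0' hlt
    have h2 : ENNReal.ofReal c' < spectralRadius ℂ A :=
      lt_of_lt_of_le ((ENNReal.ofReal_lt_ofReal_iff hc_pos).mpr hlt) hsr
    rw [spectralRadius] at h2
    simp only [lt_iSup_iff] at h2
    obtain ⟨μ, hμ, hlt2⟩ := h2
    refine ⟨μ, hμ, ?_⟩
    have h3 := (ENNReal.ofReal_lt_iff_lt_toReal h0' ENNReal.coe_ne_top).mp hlt2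
    simpa using h3
  constructor
  · rw [hmu]
    refine le_of_forall_lt fun c' hc' => ?_
    rcases le_or_gt 0 c' with h0' | h0'
    · obtain ⟨μ, hμ, hlt⟩ := hex c' h0' hc'
      exact lt_of_lt_of_le hlt (le_csSup hbdd ⟨μ, hμ, rfl⟩)
    · obtain ⟨μ, hμ, -⟩ := hex 0 le_rfl hc_pos
      exact lt_of_lt_of_le h0' ((norm_nonneg μ).trans (le_csSup hbdd ⟨μ, hμ, rfl⟩))
  · rw [hmu]
    refine Real.sSup_le ?_ ((hq_pos (Classical.arbitrary _)).le.trans (le_ciSup hqb _))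
    rintro r ⟨μ, hμ, rfl⟩
    exact hupper μ hμ

end Aux
end

section
/- Let G be a strongly connected simple digraph on n ≥ 2 vertices, u,v ∈ V(G) with (u,v) ∉ E(G), and 0 ≤ α < 1. Then μ_α(G) > μ_α(G + (u,v)), i.e., adding an arc strictly decreases the D_α spectral radius. -/
open Matrix BigOperators

section Aux
open Filter Topology
open scoped ENNReal NNReal
variable {n : ℕ}

attribute [local instance] Matrix.linftyOpNormedAddCommGroup Matrix.linftyOpNormedRing Matrix.linftyOpNormedAlgebra
variable {n : ℕ}
noncomputable def mc (M : Matrix (Fin n) (Fin n) ℝ) : Matrix (Fin n) (Fin n) ℂ :=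
  M.map (fun x => (x : ℂ))

lemma mc_pow (M : Matrix (Fin n) (Fin n) ℝ) (k : ℕ) : mc (M ^ k) = (mc M) ^ k := by
  have : mc M = Complex.ofRealHom.mapMatrix M := rfl
  simp only [mc] at *
  rw [show (fun x : ℝ => (x:ℂ)) = Complex.ofRealHom from rfl]
  exact map_pow Complex.ofRealHom.mapMatrix M k

lemma nnnorm_mc_le {P Q : Matrix (Fin n) (Fin n) ℝ} (h : ∀ i j, |P i j| ≤ Q i j) :
    ‖mc P‖₊ ≤ ‖mc Q‖₊ := by
  rw [Matrix.linfty_opNNNorm_def, Matrix.linfty_opNNNorm_def]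
  apply Finset.sup_mono_fun
  intro i _
  apply Finset.sum_le_sum
  intro j _
  simp only [mc, Matrix.map_apply, Complex.nnnorm_real]
  have h2 : |P i j| ≤ |Q i j| := (h i j).trans (le_abs_self _)
  simpa [← Real.nnnorm_abs] using NNReal.coe_le_coe.mp (by simpa [Real.norm_eq_abs] using h2)

lemma entry_le_nnnorm_mc (M : Matrix (Fin n) (Fin n) ℝ) (i j : Fin n) :
    ‖M i j‖₊ ≤ ‖mc M‖₊ := by
  rw [Matrix.linfty_opNNNorm_def]
  calc ‖M i j‖₊ ≤ ∑ j', ‖mc M i j'‖₊ := by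
        refine le_trans (le_of_eq ?_) (Finset.single_le_sum (f := fun j' => ‖mc M i j'‖₊) (fun _ _ => zero_le) (Finset.mem_univ j))
        simp [mc, Complex.nnnorm_real]
    _ ≤ _ := Finset.le_sup (f := fun i => ∑ j', ‖mc M i j'‖₊) (Finset.mem_univ i)


lemma specRad_isGreatest (hn : 1 ≤ n) (M : Matrix (Fin n) (Fin n) ℝ) :
    IsGreatest {r : ℝ | ∃ μ ∈ spectrum ℂ (M.map (fun x => (x : ℂ))), r = ‖μ‖}
      ((spectralRadius ℂ (mc M)).toReal) := by
  haveI : Nonempty (Fin n) := Fin.pos_iff_nonempty.mp hn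
  obtain ⟨z, hz, hzr⟩ := spectrum.exists_nnnorm_eq_spectralRadius (mc M)
  have htoReal : (spectralRadius ℂ (mc M)).toReal = ‖z‖ := by
    rw [← hzr]; simp
  constructor
  · exact ⟨z, hz, htoReal⟩
  · rintro r ⟨μ, hμ, rfl⟩
    have : (‖μ‖₊ : ℝ≥0∞) ≤ spectralRadius ℂ (mc M) := by
      unfold spectralRadius
      exact le_iSup₂ (f := fun k (_ : k ∈ spectrum ℂ (mc M)) => (‖k‖₊ : ℝ≥0∞)) μ hμ
    rw [← hzr] at this
    have h2 : ‖μ‖₊ ≤ ‖z‖₊ := by exact_mod_cast this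
    rw [htoReal]
    calc ‖μ‖ ≤ ‖z‖ := h2

lemma specRad_eq_toReal (hn : 1 ≤ n) (M : Matrix (Fin n) (Fin n) ℝ) :
    specRad M = (spectralRadius ℂ (mc M)).toReal :=
  (specRad_isGreatest hn M).csSup_eq

lemma tendsto_specRad (hn : 1 ≤ n) (M : Matrix (Fin n) (Fin n) ℝ) :
    Tendsto (fun k : ℕ => ‖(mc M) ^ k‖ ^ (1 / (k:ℝ))) atTop (𝓝 (specRad M)) := by
  have h := spectrum.pow_norm_pow_one_div_tendsto_nhds_spectralRadius (mc M)
  have hne : spectralRadius ℂ (mc M) ≠ ⊤ := by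
    haveI : Nonempty (Fin n) := Fin.pos_iff_nonempty.mp hn
    exact ne_top_of_le_ne_top ENNReal.coe_ne_top (spectrum.spectralRadius_le_nnnorm (𝕜 := ℂ) (mc M))
  have h2 := (ENNReal.tendsto_toReal hne).comp h
  rw [specRad_eq_toReal hn]
  convert h2 using 2 with k
  simp only [Function.comp_apply, ENNReal.toReal_ofReal (Real.rpow_nonneg (norm_nonneg _) _)]

section EntryOrder
variable {P Q R S : Matrix (Fin n) (Fin n) ℝ}

lemma mul_entry_nonneg (hP : ∀ i j, 0 ≤ P i j) (hR : ∀ i j, 0 ≤ R i j) :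
    ∀ i j, 0 ≤ (P * R) i j := fun i j => by
  rw [Matrix.mul_apply]
  exact Finset.sum_nonneg fun k _ => mul_nonneg (hP i k) (hR k j)

lemma pow_entry_nonneg (hP : ∀ i j, 0 ≤ P i j) : ∀ (k : ℕ) (hk : 1 ≤ k), ∀ i j, 0 ≤ (P ^ k) i j := by
  intro k
  induction k with
  | zero => omega
  | succ m ih =>
    intro _ i j
    rcases Nat.eq_or_lt_of_le (Nat.one_le_iff_ne_zero.mpr (Nat.succ_ne_zero m)) with h | h
    · rw [pow_succ]
      rcases Nat.eq_zero_or_pos m with rfl | hm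
      · simpa [pow_zero, Matrix.one_mul] using hP i j
      · exact mul_entry_nonneg (ih hm) hP i j
    · rw [pow_succ]
      rcases Nat.eq_zero_or_pos m with rfl | hm
      · simpa [pow_zero, Matrix.one_mul] using hP i j
      · exact mul_entry_nonneg (ih hm) hP i j

lemma mul_entry_le (hP : ∀ i j, 0 ≤ P i j) (hR : ∀ i j, 0 ≤ R i j)
    (hPQ : ∀ i j, P i j ≤ Q i j) (hRS : ∀ i j, R i j ≤ S i j) :
    ∀ i j, (P * R) i j ≤ (Q * S) i j := fun i j => by
  rw [Matrix.mul_apply, Matrix.mul_apply]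
  exact Finset.sum_le_sum fun k _ =>
    mul_le_mul (hPQ i k) (hRS k j) (hR k j) ((hP i k).trans (hPQ i k))

lemma pow_entry_le (hP : ∀ i j, 0 ≤ P i j) (hPQ : ∀ i j, P i j ≤ Q i j) (k : ℕ) :
    ∀ i j, (P ^ k) i j ≤ (Q ^ k) i j := by
  induction k with
  | zero => simp
  | succ m ih =>
    rw [pow_succ, pow_succ]
    rcases Nat.eq_zero_or_pos m with rfl | hm
    · simpa using hPQ
    · exact mul_entry_le (pow_entry_nonneg hP m hm) hP ih hPQ

end EntryOrder

lemma exists_third (hn3 : 3 ≤ n) (i j : Fin n) : ∃ k : Fin n, k ≠ i ∧ k ≠ j := by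
  have h : (({i, j} : Finset (Fin n))ᶜ).Nonempty := by
    rw [← Finset.card_pos, Finset.card_compl]
    have h2 : ({i, j} : Finset (Fin n)).card ≤ 2 :=
      (Finset.card_insert_le _ _).trans (by simp)
    have h3 : Fintype.card (Fin n) = n := Fintype.card_fin n
    omega
  obtain ⟨k, hk⟩ := h
  simp only [Finset.mem_compl, Finset.mem_insert, Finset.mem_singleton, not_or] at hk
  exact ⟨k, hk.1, hk.2⟩

section Key
variable {A B : Matrix (Fin n) (Fin n) ℝ}

lemma sq_pos (hn3 : 3 ≤ n) (hA0 : ∀ i j, 0 ≤ A i j) (hAoff : ∀ i j, i ≠ j → 0 < A i j) :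
    ∀ i j, 0 < (A * A) i j := by
  intro i j
  obtain ⟨k, hki, hkj⟩ := exists_third hn3 i j
  rw [Matrix.mul_apply]
  calc (0:ℝ) < A i k * A k j := mul_pos (hAoff i k (Ne.symm hki)) (hAoff k j hkj)
    _ ≤ _ := Finset.single_le_sum (f := fun k => A i k * A k j)
        (fun m _ => mul_nonneg (hA0 i m) (hA0 m j)) (Finset.mem_univ k)

lemma mul_pos_entry {P Q : Matrix (Fin n) (Fin n) ℝ}
    (hP : ∀ i j, 0 ≤ P i j) (hQ : ∀ i j, 0 ≤ Q i j) {i j k : Fin n}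
    (h1 : 0 < P i k) (h2 : 0 < Q k j) : 0 < (P * Q) i j := by
  rw [Matrix.mul_apply]
  calc (0:ℝ) < P i k * Q k j := mul_pos h1 h2
    _ ≤ _ := Finset.single_le_sum (f := fun m => P i m * Q m j)
        (fun m _ => mul_nonneg (hP i m) (hQ m j)) (Finset.mem_univ k)

lemma mc_smul (s : ℝ) (M : Matrix (Fin n) (Fin n) ℝ) : mc (s • M) = (s : ℂ) • mc M := by
  ext i j
  simp [mc, Complex.ofReal_mul]

lemma norm_mc_smul {s : ℝ} (hs : 0 ≤ s) (M : Matrix (Fin n) (Fin n) ℝ) :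
    ‖mc (s • M)‖ = s * ‖mc M‖ := by
  rw [mc_smul, norm_smul]
  simp [abs_of_nonneg hs]

lemma tendsto_two_mul : Tendsto (fun k : ℕ => 2 * k) atTop atTop :=
  StrictMono.tendsto_atTop (fun a b h => by omega)

lemma tendsto_four_mul : Tendsto (fun k : ℕ => 4 * k) atTop atTop :=
  StrictMono.tendsto_atTop (fun a b h => by omega)

lemma specRad_pos (hn3 : 3 ≤ n) (hA0 : ∀ i j, 0 ≤ A i j)
    (hAoff : ∀ i j, i ≠ j → 0 < A i j) : 0 < specRad A := by
  have hn1 : 1 ≤ n := by omega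
  haveI : Nonempty (Fin n) := Fin.pos_iff_nonempty.mp hn1
  have hA2 := sq_pos hn3 hA0 hAoff
  set c2 : ℝ := Finset.univ.inf' Finset.univ_nonempty (fun p : Fin n × Fin n => (A * A) p.1 p.2) with hc2
  have hc2pos : 0 < c2 := by
    rw [hc2, Finset.lt_inf'_iff]
    exact fun p _ => hA2 p.1 p.2
  have hc2le : ∀ i j, c2 ≤ (A * A) i j := fun i j =>
    Finset.inf'_le _ (Finset.mem_univ (i, j))
  have hA2nn : ∀ i j, 0 ≤ (A * A) i j := fun i j => (hA2 i j).le
  -- lower bound on entries of (A*A)^k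
  have hlow : ∀ k : ℕ, 1 ≤ k → ∀ i j, c2 ^ k ≤ ((A * A) ^ k) i j := by
    intro k
    induction k with
    | zero => omega
    | succ m ih =>
      intro _ i j
      rcases Nat.eq_zero_or_pos m with rfl | hm
      · simpa using hc2le i j
      · rw [pow_succ, pow_succ, Matrix.mul_apply]
        calc c2 ^ m * c2 ≤ ((A * A) ^ m) i j * (A * A) j j :=
              mul_le_mul (ih hm i j) (hc2le j j) hc2pos.le
                ((pow_entry_nonneg hA2nn m hm i j))
          _ ≤ _ := Finset.single_le_sum (f := fun l => ((A * A) ^ m) i l * (A * A) l j)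
              (fun l _ => mul_nonneg (pow_entry_nonneg hA2nn m hm i l) (hA2nn l j))
              (Finset.mem_univ j)
  set i0 : Fin n := ⟨0, by omega⟩
  have hnorm : ∀ k : ℕ, 1 ≤ k → c2 ^ k ≤ ‖(mc A) ^ (2 * k)‖ := by
    intro k hk
    rw [← mc_pow]
    have h1 : (A ^ (2 * k)) i0 i0 = ((A * A) ^ k) i0 i0 := by
      rw [pow_mul, pow_two]
    have h2 := entry_le_nnnorm_mc (A ^ (2 * k)) i0 i0
    have h3 : ‖(A ^ (2 * k)) i0 i0‖ ≤ ‖mc (A ^ (2 * k))‖ := h2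
    calc c2 ^ k ≤ ((A * A) ^ k) i0 i0 := hlow k hk i0 i0
      _ ≤ |(A ^ (2 * k)) i0 i0| := by rw [h1]; exact le_abs_self _
      _ ≤ ‖mc (A ^ (2 * k))‖ := by rwa [Real.norm_eq_abs] at h3
  have htA2 : Tendsto (fun k : ℕ => ‖(mc A) ^ (2 * k)‖ ^ (1 / ((2 * k : ℕ) : ℝ)))
      atTop (𝓝 (specRad A)) := (tendsto_specRad hn1 A).comp tendsto_two_mul
  have hev : ∀ᶠ k : ℕ in atTop, c2 ^ ((1:ℝ)/2) ≤ ‖(mc A) ^ (2 * k)‖ ^ (1 / ((2 * k : ℕ) : ℝ)) := by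
    filter_upwards [Filter.eventually_ge_atTop 1] with k hk
    have hkne : ((k:ℝ)) ≠ 0 := by positivity
    have : c2 ^ ((1:ℝ)/2) = (c2 ^ k) ^ (1 / ((2 * k : ℕ) : ℝ)) := by
      rw [← Real.rpow_natCast c2 k, ← Real.rpow_mul hc2pos.le]
      congr 1
      push_cast
      field_simp
    rw [this]
    exact Real.rpow_le_rpow (by positivity) (hnorm k hk) (by positivity)
  have := ge_of_tendsto htA2 hev
  calc (0:ℝ) < c2 ^ ((1:ℝ)/2) := Real.rpow_pos_of_pos hc2pos _
    _ ≤ specRad A := this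

lemma key (hn3 : 3 ≤ n)
    (hA0 : ∀ i j, 0 ≤ A i j) (hAoff : ∀ i j, i ≠ j → 0 < A i j)
    (hB0 : ∀ i j, 0 ≤ B i j) (hBoff : ∀ i j, i ≠ j → 0 < B i j)
    (hBA : ∀ i j, B i j ≤ A i j)
    {u v : Fin n} (huv : u ≠ v) (hstrict : B u v < A u v) :
    specRad B < specRad A := by
  have hn1 : 1 ≤ n := by omega
  haveI : Nonempty (Fin n) := Fin.pos_iff_nonempty.mp hn1
  set C : Matrix (Fin n) (Fin n) ℝ := A - B with hC
  have hC0 : ∀ i j, 0 ≤ C i j := fun i j => by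
    simp only [hC, Matrix.sub_apply]; linarith [hBA i j]
  have hCuv : 0 < C u v := by simp only [hC, Matrix.sub_apply]; linarith
  have hA2 := sq_pos hn3 hA0 hAoff
  have hA2nn : ∀ i j, 0 ≤ (A * A) i j := fun i j => (hA2 i j).le
  have hA3 : ∀ i j, 0 < ((A * A) * A) i j := by
    intro i j
    obtain ⟨k, _, hkj⟩ := exists_third hn3 j j
    exact mul_pos_entry hA2nn hA0 (hA2 i k) (hAoff k j hkj)
  have hA3nn : ∀ i j, 0 ≤ ((A * A) * A) i j := fun i j => (hA3 i j).le
  -- decomposition of A^4 - B^4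
  have hiden : A ^ 4 - B ^ 4 =
      ((A * A) * A) * C + ((A * A) * C) * B + ((A * C) * B) * B + ((C * B) * B) * B := by
    simp only [hC, pow_succ, pow_zero, Matrix.one_mul]
    noncomm_ring
  have hT1 : ∀ i j, 0 ≤ (((A * A) * A) * C) i j := mul_entry_nonneg hA3nn hC0
  have hACnn : ∀ i j, 0 ≤ ((A * A) * C) i j := mul_entry_nonneg hA2nn hC0
  have hT2 : ∀ i j, 0 ≤ (((A * A) * C) * B) i j := mul_entry_nonneg hACnn hB0
  have hT3 : ∀ i j, 0 ≤ (((A * C) * B) * B) i j :=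
    mul_entry_nonneg (mul_entry_nonneg (mul_entry_nonneg hA0 hC0) hB0) hB0
  have hT4 : ∀ i j, 0 ≤ (((C * B) * B) * B) i j :=
    mul_entry_nonneg (mul_entry_nonneg (mul_entry_nonneg hC0 hB0) hB0) hB0
  have hD : ∀ i j, 0 < (A ^ 4 - B ^ 4) i j := by
    intro i j
    have hsum : (A ^ 4 - B ^ 4) i j =
        (((A * A) * A) * C) i j + (((A * A) * C) * B) i j
          + (((A * C) * B) * B) i j + (((C * B) * B) * B) i j := by
      rw [hiden]; simp [Matrix.add_apply]
    rw [hsum]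
    rcases eq_or_ne j v with rfl | hjv
    · have h1 : 0 < (((A * A) * A) * C) i j :=
        mul_pos_entry hA3nn hC0 (hA3 i u) hCuv
      nlinarith [hT2 i j, hT3 i j, hT4 i j]
    · have h1 : 0 < ((A * A) * C) i v :=
        mul_pos_entry hA2nn hC0 (hA2 i u) hCuv
      have h2 : 0 < (((A * A) * C) * B) i j :=
        mul_pos_entry hACnn hB0 h1 (hBoff v j (Ne.symm hjv))
      nlinarith [hT1 i j, hT3 i j, hT4 i j]
  -- extract uniform bounds
  set c : ℝ := Finset.univ.inf' Finset.univ_nonempty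
      (fun p : Fin n × Fin n => (A ^ 4 - B ^ 4) p.1 p.2) with hcdef
  have hcpos : 0 < c := by
    rw [hcdef, Finset.lt_inf'_iff]
    exact fun p _ => hD p.1 p.2
  have hcle : ∀ i j, c ≤ (A ^ 4 - B ^ 4) i j := fun i j =>
    Finset.inf'_le _ (Finset.mem_univ (i, j))
  set Mx : ℝ := Finset.univ.sup' Finset.univ_nonempty
      (fun p : Fin n × Fin n => (A ^ 4) p.1 p.2) with hMdef
  have hMle : ∀ i j, (A ^ 4) i j ≤ Mx := fun i j =>
    Finset.le_sup' (f := fun p : Fin n × Fin n => (A ^ 4) p.1 p.2) (Finset.mem_univ (i, j))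
  have hB4nn : ∀ i j, 0 ≤ (B ^ 4) i j := pow_entry_nonneg hB0 4 (by norm_num)
  have hA4nn : ∀ i j, 0 ≤ (A ^ 4) i j := pow_entry_nonneg hA0 4 (by norm_num)
  have hMpos : 0 < Mx := by
    have h1 : c ≤ (A ^ 4 - B ^ 4) u u := hcle u u
    have h2 : (A ^ 4 - B ^ 4) u u ≤ (A ^ 4) u u := by
      simp only [Matrix.sub_apply]; linarith [hB4nn u u]
    linarith [hMle u u]
  set δ : ℝ := c / Mx with hδdef
  have hδpos : 0 < δ := div_pos hcpos hMpos
  have hδ1 : δ ≤ 1 := by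
    rw [hδdef, div_le_one hMpos]
    have h1 : c ≤ (A ^ 4 - B ^ 4) u u := hcle u u
    have h2 : (A ^ 4 - B ^ 4) u u ≤ (A ^ 4) u u := by
      simp only [Matrix.sub_apply]; linarith [hB4nn u u]
    linarith [hMle u u]
  have h1δ0 : 0 ≤ 1 - δ := by linarith
  -- entrywise bound B^4 ≤ (1-δ) • A^4
  have hstep : ∀ i j, (B ^ 4) i j ≤ ((1 - δ) • A ^ 4) i j := by
    intro i j
    have h1 : δ * (A ^ 4) i j ≤ c := by
      rw [hδdef]
      calc c / Mx * (A ^ 4) i j ≤ c / Mx * Mx :=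
            mul_le_mul_of_nonneg_left (hMle i j) (le_of_lt hδpos)
        _ = c := div_mul_cancel₀ c (ne_of_gt hMpos)
    have h2 : c ≤ (A ^ 4) i j - (B ^ 4) i j := by
      have := hcle i j; simpa [Matrix.sub_apply] using this
    simp only [Matrix.smul_apply, smul_eq_mul]
    nlinarith
  have hsmul0 : ∀ i j, 0 ≤ ((1 - δ) • A ^ 4) i j := by
    intro i j
    simp only [Matrix.smul_apply, smul_eq_mul]
    exact mul_nonneg h1δ0 (hA4nn i j)
  -- norm comparison for powers
  have hnorm : ∀ k : ℕ, 1 ≤ k →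
      ‖(mc B) ^ (4 * k)‖ ≤ (1 - δ) ^ k * ‖(mc A) ^ (4 * k)‖ := by
    intro k hk
    rw [← mc_pow, ← mc_pow]
    have hpw : ∀ i j, ((B ^ 4) ^ k) i j ≤ (((1 - δ) • A ^ 4) ^ k) i j :=
      pow_entry_le hB4nn hstep k
    have habs : ∀ i j, |(B ^ (4 * k)) i j| ≤ ((1 - δ) ^ k • (A ^ 4) ^ k) i j := by
      intro i j
      rw [pow_mul, abs_of_nonneg (pow_entry_nonneg hB4nn k hk i j)]
      calc ((B ^ 4) ^ k) i j ≤ (((1 - δ) • A ^ 4) ^ k) i j := hpw i j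
        _ = ((1 - δ) ^ k • (A ^ 4) ^ k) i j := by rw [smul_pow]
    have h2 : ‖mc (B ^ (4 * k))‖₊ ≤ ‖mc ((1 - δ) ^ k • (A ^ 4) ^ k)‖₊ :=
      nnnorm_mc_le habs
    have h3 : ‖mc (B ^ (4 * k))‖ ≤ ‖mc ((1 - δ) ^ k • (A ^ 4) ^ k)‖ := h2
    rw [norm_mc_smul (pow_nonneg h1δ0 k) _] at h3
    rw [← pow_mul] at h3
    exact h3
  -- limits
  have htB : Tendsto (fun k : ℕ => ‖(mc B) ^ (4 * k)‖ ^ (1 / ((4 * k : ℕ) : ℝ)))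
      atTop (𝓝 (specRad B)) := (tendsto_specRad hn1 B).comp tendsto_four_mul
  have htA : Tendsto (fun k : ℕ => (1 - δ) ^ ((1:ℝ)/4) * ‖(mc A) ^ (4 * k)‖ ^ (1 / ((4 * k : ℕ) : ℝ)))
      atTop (𝓝 ((1 - δ) ^ ((1:ℝ)/4) * specRad A)) :=
    ((tendsto_specRad hn1 A).comp tendsto_four_mul).const_mul _
  have hev : ∀ᶠ k : ℕ in atTop,
      ‖(mc B) ^ (4 * k)‖ ^ (1 / ((4 * k : ℕ) : ℝ)) ≤
      (1 - δ) ^ ((1:ℝ)/4) * ‖(mc A) ^ (4 * k)‖ ^ (1 / ((4 * k : ℕ) : ℝ)) := by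
    filter_upwards [Filter.eventually_ge_atTop 1] with k hk
    have hkne : ((k:ℝ)) ≠ 0 := by positivity
    have hrw : ((1 - δ) ^ k) ^ (1 / ((4 * k : ℕ) : ℝ)) = (1 - δ) ^ ((1:ℝ)/4) := by
      rw [← Real.rpow_natCast (1 - δ) k, ← Real.rpow_mul h1δ0]
      congr 1
      push_cast
      field_simp
    calc ‖(mc B) ^ (4 * k)‖ ^ (1 / ((4 * k : ℕ) : ℝ))
        ≤ ((1 - δ) ^ k * ‖(mc A) ^ (4 * k)‖) ^ (1 / ((4 * k : ℕ) : ℝ)) :=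
          Real.rpow_le_rpow (norm_nonneg _) (hnorm k hk) (by positivity)
      _ = ((1 - δ) ^ k) ^ (1 / ((4 * k : ℕ) : ℝ)) * ‖(mc A) ^ (4 * k)‖ ^ (1 / ((4 * k : ℕ) : ℝ)) :=
          Real.mul_rpow (pow_nonneg h1δ0 k) (norm_nonneg _)
      _ = (1 - δ) ^ ((1:ℝ)/4) * ‖(mc A) ^ (4 * k)‖ ^ (1 / ((4 * k : ℕ) : ℝ)) := by rw [hrw]
  have hle : specRad B ≤ (1 - δ) ^ ((1:ℝ)/4) * specRad A :=
    le_of_tendsto_of_tendsto htB htA hev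
  have hrApos : 0 < specRad A := specRad_pos hn3 hA0 hAoff
  have hq1 : (1 - δ) ^ ((1:ℝ)/4) < 1 := by
    rcases eq_or_lt_of_le h1δ0 with h | h
    · rw [← h, Real.zero_rpow (by norm_num)]; norm_num
    · exact Real.rpow_lt_one h1δ0 (by linarith) (by norm_num)
  calc specRad B ≤ (1 - δ) ^ ((1:ℝ)/4) * specRad A := hle
    _ < 1 * specRad A := mul_lt_mul_of_pos_right hq1 hrApos
    _ = specRad A := one_mul _

end Key

end Aux

theorem stmt6 {n : ℕ} (hn : 2 ≤ n) (G : Digraph (Fin n)) (hG : Loopless G) (hsc : SConn G)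
    (u v : Fin n) (huv : u ≠ v) (hnadj : ¬ G.Adj u v)
    (α : ℝ) (h0 : 0 ≤ α) (h1 : α < 1) :
    mualpha α (Digraph.mk (fun i j => G.Adj i j ∨ (i = u ∧ j = v))) < mualpha α G := by
  set G' : Digraph (Fin n) := Digraph.mk (fun i j => G.Adj i j ∨ (i = u ∧ j = v)) with hG'
  have hlift : ∀ i j k, DWalk G i j k → DWalk G' i j k := by
    rintro i j k ⟨f, hf0, hfk, ha⟩
    exact ⟨f, hf0, hfk, fun l hl => Or.inl (ha l hl)⟩
  have hsc' : SConn G' := fun i j => (hsc i j).imp fun k => hlift i j k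
  have hne : ∀ i j, {k | DWalk G i j k}.Nonempty := fun i j => hsc i j
  have hne' : ∀ i j, {k | DWalk G' i j k}.Nonempty := fun i j => hsc' i j
  have hmem : ∀ i j, DWalk G i j (ddist G i j) := fun i j => Nat.sInf_mem (hne i j)
  have hmem' : ∀ i j, DWalk G' i j (ddist G' i j) := fun i j => Nat.sInf_mem (hne' i j)
  have hzero : ∀ (H : Digraph (Fin n)) (i j : Fin n), DWalk H i j 0 → i = j := by
    rintro H i j ⟨f, hf0, hfk, -⟩
    rw [← hf0, hfk]
  have hd_le : ∀ i j, ddist G' i j ≤ ddist G i j := fun i j =>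
    Nat.sInf_le (hlift i j _ (hmem i j))
  have h1' : ∀ i j, i ≠ j → 1 ≤ ddist G' i j := by
    intro i j hij
    rcases Nat.eq_zero_or_pos (ddist G' i j) with h | h
    · exact absurd (hzero G' i j (h ▸ hmem' i j)) hij
    · exact h
  have h1G : ∀ i j, i ≠ j → 1 ≤ ddist G i j := by
    intro i j hij
    rcases Nat.eq_zero_or_pos (ddist G i j) with h | h
    · exact absurd (hzero G i j (h ▸ hmem i j)) hij
    · exact h
  have hduv2 : 2 ≤ ddist G u v := by
    rcases Nat.lt_or_ge (ddist G u v) 2 with h | h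
    · exfalso
      have h1le := h1G u v huv
      have hd1 : ddist G u v = 1 := by omega
      obtain ⟨f, hf0, hfk, ha⟩ := hmem u v
      rw [hd1] at hfk ha
      have := ha 0 (by omega)
      rw [hf0, hfk] at this
      exact hnadj this
    · exact h
  have hd'uv : ddist G' u v = 1 := by
    have hw : DWalk G' u v 1 := by
      refine ⟨fun l => if l = 0 then u else v, by simp, by simp, ?_⟩
      intro l hl
      have : l = 0 := by omega
      subst this
      simp only [if_pos rfl, if_neg one_ne_zero]
      exact Or.inr ⟨rfl, rfl⟩
    have hle : ddist G' u v ≤ 1 := Nat.sInf_le hw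
    have := h1' u v huv
    omega
  have hn3 : 3 ≤ n := by
    obtain ⟨f, hf0, hfk, ha⟩ := hmem u v
    have hadj : G.Adj u (f 1) := by
      have := ha 0 (by omega)
      rwa [hf0] at this
    have hwu : f 1 ≠ u := fun h => hG u (h ▸ hadj)
    have hwv : f 1 ≠ v := fun h => hnadj (h ▸ hadj)
    have hcard : ({u, v, f 1} : Finset (Fin n)).card = 3 := by
      rw [Finset.card_insert_of_notMem (by simp [huv, Ne.symm hwu]),
        Finset.card_insert_of_notMem (by simp [Ne.symm hwv]), Finset.card_singleton]
    calc (3:ℕ) = ({u, v, f 1} : Finset (Fin n)).card := hcard.symm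
      _ ≤ Fintype.card (Fin n) := Finset.card_le_univ _
      _ = n := Fintype.card_fin n
  -- entries
  have hα1 : (0:ℝ) < 1 - α := by linarith
  have entry : ∀ (H : Digraph (Fin n)) (i j : Fin n),
      Dalpha α H i j = α * (if i = j then transm H i else 0) + (1 - α) * (ddist H i j : ℝ) := by
    intro H i j
    simp [Dalpha, Matrix.add_apply, Matrix.smul_apply, Matrix.diagonal_apply, smul_eq_mul]
  have htransm0 : ∀ (H : Digraph (Fin n)) (i : Fin n), 0 ≤ transm H i := fun H i =>
    Finset.sum_nonneg fun j _ => Nat.cast_nonneg _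
  have htransm_le : ∀ i, transm G' i ≤ transm G i := fun i =>
    Finset.sum_le_sum fun j _ => Nat.cast_le.mpr (hd_le i j)
  have hA0 : ∀ i j, 0 ≤ Dalpha α G i j := by
    intro i j
    rw [entry]
    have := htransm0 G i
    positivity
  have hAoff : ∀ i j, i ≠ j → 0 < Dalpha α G i j := by
    intro i j hij
    rw [entry, if_neg hij, mul_zero, zero_add]
    have : (1:ℝ) ≤ (ddist G i j : ℝ) := by exact_mod_cast h1G i j hij
    nlinarith
  have hB0 : ∀ i j, 0 ≤ Dalpha α G' i j := by
    intro i j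
    rw [entry]
    have := htransm0 G' i
    positivity
  have hBoff : ∀ i j, i ≠ j → 0 < Dalpha α G' i j := by
    intro i j hij
    rw [entry, if_neg hij, mul_zero, zero_add]
    have : (1:ℝ) ≤ (ddist G' i j : ℝ) := by exact_mod_cast h1' i j hij
    nlinarith
  have hBA : ∀ i j, Dalpha α G' i j ≤ Dalpha α G i j := by
    intro i j
    rw [entry, entry]
    have h2 : (ddist G' i j : ℝ) ≤ (ddist G i j : ℝ) := Nat.cast_le.mpr (hd_le i j)
    have h3 : (if i = j then transm G' i else 0) ≤ (if i = j then transm G i else 0) := by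
      split
      · exact htransm_le i
      · exact le_refl 0
    exact add_le_add (mul_le_mul_of_nonneg_left h3 h0) (mul_le_mul_of_nonneg_left h2 hα1.le)
  have hstrict : Dalpha α G' u v < Dalpha α G u v := by
    rw [entry, entry, hd'uv]
    simp only [if_neg huv]
    have h2 : (2:ℝ) ≤ (ddist G u v : ℝ) := by exact_mod_cast hduv2
    push_cast
    nlinarith
  exact key hn3 hA0 hAoff hB0 hBoff hBA huv hstrict
end

section
/- Let G be a strongly connected simple digraph on n vertices and 0 ≤ α < 1. Then n - 1 ≤ μ_α(G) ≤ n(n-1)/2. Moreover, μ_α(G) = n - 1 if and only if G is the complete digraph on n vertices, and μ_α(G) = n(n-1)/2 if and only if G is the directed cycle C_n. -/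
open Matrix BigOperators

attribute [local instance] Matrix.linftyOpNormedRing Matrix.linftyOpNormedAlgebra


namespace SpecAux

variable {n : ℕ}

def SS (M : Matrix (Fin n) (Fin n) ℝ) : Set ℝ :=
  {r : ℝ | ∃ μ ∈ spectrum ℂ (M.map (fun x => (x : ℂ))), r = ‖μ‖}

lemma specRad_eq (M : Matrix (Fin n) (Fin n) ℝ) : specRad M = sSup (SS M) := rfl

lemma eig_vec {M : Matrix (Fin n) (Fin n) ℂ} {μ : ℂ} (h : μ ∈ spectrum ℂ M) :
    ∃ v ≠ 0, M *ᵥ v = μ • v := by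
  rw [spectrum.mem_iff] at h
  have hdet : (algebraMap ℂ (Matrix (Fin n) (Fin n) ℂ) μ - M).det = 0 := by
    by_contra hd
    exact h ((Matrix.isUnit_iff_isUnit_det _).mpr (isUnit_iff_ne_zero.mpr hd))
  obtain ⟨v, hv, hv0⟩ := (Matrix.exists_mulVec_eq_zero_iff).mpr hdet
  refine ⟨v, hv, ?_⟩
  have := hv0
  rw [sub_mulVec] at this
  have h2 : (algebraMap ℂ (Matrix (Fin n) (Fin n) ℂ) μ) *ᵥ v = μ • v := by
    rw [Algebra.algebraMap_eq_smul_one, smul_mulVec, one_mulVec]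
  have := sub_eq_zero.mp this
  rw [h2] at this
  exact this.symm

lemma nonempty_SS (hn : 0 < n) (M : Matrix (Fin n) (Fin n) ℝ) : (SS M).Nonempty := by
  haveI : NeZero n := ⟨by omega⟩
  obtain ⟨μ, hμ⟩ := spectrum.nonempty (M.map (fun x => (x : ℂ)))
  exact ⟨‖μ‖, μ, hμ, rfl⟩

lemma eig_abs_le {M : Matrix (Fin n) (Fin n) ℝ} (hM : ∀ i j, 0 ≤ M i j)
    {μ : ℂ} {v : Fin n → ℂ} (hv : v ≠ 0)
    (hev : (M.map (fun x => (x : ℂ))) *ᵥ v = μ • v)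
    {s : ℝ} (hs : ∀ i, ∑ j, M i j ≤ s) : ‖μ‖ ≤ s := by
  have hne : (Finset.univ : Finset (Fin n)).Nonempty := by
    rcases Function.ne_iff.mp hv with ⟨j, _⟩
    exact ⟨j, Finset.mem_univ j⟩
  obtain ⟨i, -, hi⟩ := Finset.exists_max_image Finset.univ (fun i => ‖v i‖) hne
  have hvi : 0 < ‖v i‖ := by
    rcases Function.ne_iff.mp hv with ⟨j, hj⟩
    calc (0:ℝ) < ‖v j‖ := norm_pos_iff.mpr hj
    _ ≤ ‖v i‖ := hi j (Finset.mem_univ j)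
  have hrow : μ * v i = ∑ j, (M i j : ℂ) * v j := by
    have := congrFun hev i
    simp only [mulVec, dotProduct, Pi.smul_apply, smul_eq_mul, Matrix.map_apply] at this
    rw [← this]
  have : ‖μ‖ * ‖v i‖ ≤ s * ‖v i‖ := by
    calc ‖μ‖ * ‖v i‖ = ‖μ * v i‖ := (norm_mul _ _).symm
    _ = ‖∑ j, (M i j : ℂ) * v j‖ := by rw [hrow]
    _ ≤ ∑ j, ‖(M i j : ℂ) * v j‖ := by
        exact norm_sum_le _ _
    _ = ∑ j, M i j * ‖v j‖ := by
        refine Finset.sum_congr rfl fun j _ => ?_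
        rw [norm_mul, Complex.norm_real, Real.norm_of_nonneg (hM i j)]
    _ ≤ ∑ j, M i j * ‖v i‖ := by
        refine Finset.sum_le_sum fun j _ => ?_
        exact mul_le_mul_of_nonneg_left (hi j (Finset.mem_univ j)) (hM i j)
    _ = (∑ j, M i j) * ‖v i‖ := by rw [Finset.sum_mul]
    _ ≤ s * ‖v i‖ := by
        exact mul_le_mul_of_nonneg_right (hs i) (le_of_lt hvi)
  exact le_of_mul_le_mul_right this hvi

lemma SS_bddAbove {M : Matrix (Fin n) (Fin n) ℝ} (hM : ∀ i j, 0 ≤ M i j)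
    {s : ℝ} (hs : ∀ i, ∑ j, M i j ≤ s) : ∀ r ∈ SS M, r ≤ s := by
  rintro r ⟨μ, hμ, rfl⟩
  obtain ⟨v, hv, hev⟩ := eig_vec hμ
  exact eig_abs_le hM hv hev hs

lemma specRad_le (hn : 0 < n) {M : Matrix (Fin n) (Fin n) ℝ} (hM : ∀ i j, 0 ≤ M i j)
    {s : ℝ} (hs : ∀ i, ∑ j, M i j ≤ s) : specRad M ≤ s :=
  csSup_le (nonempty_SS hn M) (SS_bddAbove hM hs)

end SpecAux

namespace SpecAux
variable {n : ℕ}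

lemma map_eq (M : Matrix (Fin n) (Fin n) ℝ) :
    M.map (fun x => (x : ℂ)) = (Complex.ofRealHom.mapMatrix : Matrix (Fin n) (Fin n) ℝ →+* _) M := rfl

lemma specRad_sq_le (hn : 0 < n) {M : Matrix (Fin n) (Fin n) ℝ} (hM : ∀ i j, 0 ≤ (M * M) i j)
    {b : ℝ} (hb : ∀ i, ∑ j, (M * M) i j ≤ b) : specRad M ≤ Real.sqrt b := by
  refine csSup_le (nonempty_SS hn M) ?_
  rintro r ⟨μ, hμ, rfl⟩
  obtain ⟨v, hv, hev⟩ := eig_vec hμ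
  have hev2 : ((M * M).map (fun x => (x : ℂ))) *ᵥ v = (μ * μ) • v := by
    rw [map_eq, _root_.map_mul, ← Matrix.mulVec_mulVec]
    rw [← map_eq, hev, Matrix.mulVec_smul, hev, smul_smul]
  have h2 : ‖μ * μ‖ ≤ b := eig_abs_le hM hv hev2 hb
  rw [norm_mul] at h2
  have : ‖μ‖ ^ 2 ≤ b := by nlinarith [norm_nonneg μ]
  have hb0 : 0 ≤ b := le_trans (by positivity) this
  exact (Real.le_sqrt (norm_nonneg μ) hb0).mpr this

lemma pow_entry_nonneg {M : Matrix (Fin n) (Fin n) ℝ} (hM : ∀ i j, 0 ≤ M i j) :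
    ∀ k i j, 0 ≤ (M ^ k) i j := by
  intro k
  induction k with
  | zero => intro i j; by_cases h : i = j <;> simp [pow_zero, Matrix.one_apply, h]
  | succ k ih =>
    intro i j
    rw [pow_succ, Matrix.mul_apply]
    exact Finset.sum_nonneg fun l _ => mul_nonneg (ih i l) (hM l j)

lemma pow_rowsum_ge {M : Matrix (Fin n) (Fin n) ℝ} (hM : ∀ i j, 0 ≤ M i j)
    {b : ℝ} (hb0 : 0 ≤ b) (hb : ∀ i, b ≤ ∑ j, M i j) :
    ∀ k i, b ^ k ≤ ∑ j, (M ^ k) i j := by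
  intro k
  induction k with
  | zero => intro i; simp [pow_zero, Matrix.one_apply]
  | succ k ih =>
    intro i
    have : ∑ j, (M ^ (k+1)) i j = ∑ l, M i l * (∑ j, (M ^ k) l j) := by
      rw [pow_succ']
      simp_rw [Matrix.mul_apply, Finset.mul_sum]
      rw [Finset.sum_comm]
    rw [this, pow_succ']
    calc b * b ^ k ≤ (∑ l, M i l) * b ^ k :=
          mul_le_mul_of_nonneg_right (hb i) (pow_nonneg hb0 k)
    _ = ∑ l, M i l * b ^ k := by rw [Finset.sum_mul]
    _ ≤ ∑ l, M i l * (∑ j, (M ^ k) l j) :=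
          Finset.sum_le_sum fun l _ => mul_le_mul_of_nonneg_left (ih l) (hM i l)

end SpecAux

namespace SpecAux
variable {n : ℕ}

lemma specRad_nonneg (hn : 0 < n) {M : Matrix (Fin n) (Fin n) ℝ} (hM : ∀ i j, 0 ≤ M i j)
    {s : ℝ} (hs : ∀ i, ∑ j, M i j ≤ s) : 0 ≤ specRad M := by
  obtain ⟨r, hr⟩ := nonempty_SS hn M
  have h0 : 0 ≤ r := by obtain ⟨μ, -, rfl⟩ := hr; positivity
  exact h0.trans (le_csSup ⟨s, SS_bddAbove hM hs⟩ hr)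

lemma specRad_ge (hn : 0 < n) {M : Matrix (Fin n) (Fin n) ℝ} (hM : ∀ i j, 0 ≤ M i j)
    {b s : ℝ} (hb0 : 0 ≤ b) (hb : ∀ i, b ≤ ∑ j, (M * M) i j)
    (hs : ∀ i, ∑ j, M i j ≤ s) : Real.sqrt b ≤ specRad M := by
  rcases eq_or_lt_of_le hb0 with h | hbpos
  · rw [← h, Real.sqrt_zero]; exact specRad_nonneg hn hM hs
  set A := M.map (fun x => (x : ℂ)) with hA
  have hMM : ∀ i j, 0 ≤ (M * M) i j := by
    intro i j; rw [Matrix.mul_apply]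
    exact Finset.sum_nonneg fun l _ => mul_nonneg (hM i l) (hM l j)
  have hrows : ∀ k i, b ^ k ≤ ∑ j, ((M * M) ^ k) i j := pow_rowsum_ge hMM hb0 hb
  have hmap : ∀ m : ℕ, A ^ m = (M ^ m).map (fun x => (x : ℂ)) := by
    intro m
    rw [hA, map_eq, ← _root_.map_pow, map_eq]
  have i0 : Fin n := ⟨0, hn⟩
  set b' : NNReal := b.toNNReal with hb'
  have key : ∀ k : ℕ, ((b' ^ k : NNReal) : ENNReal) ≤ (‖A ^ (2 * k)‖₊ : ENNReal) := by
    intro k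
    rw [ENNReal.coe_le_coe]
    have h1 : ‖A ^ (2 * k)‖₊ = Finset.univ.sup fun i => ∑ j, ‖(A ^ (2 * k)) i j‖₊ :=
      Matrix.linfty_opNNNorm_def _
    have h2 : ∑ j, ‖(A ^ (2 * k)) i0 j‖₊ ≤ (Finset.univ.sup fun i => ∑ j, ‖(A ^ (2 * k)) i j‖₊) :=
      Finset.le_sup (f := fun i => ∑ j, ‖(A ^ (2 * k)) i j‖₊) (Finset.mem_univ i0)
    have h3 : ((∑ j, ‖(A ^ (2 * k)) i0 j‖₊ : NNReal) : ℝ) = ∑ j, ((M ^ (2 * k)) i0 j) := by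
      push_cast
      refine Finset.sum_congr rfl fun j _ => ?_
      rw [hmap, Matrix.map_apply, Complex.norm_real,
        Real.norm_of_nonneg (pow_entry_nonneg hM _ _ _)]
    have h4 : b ^ k ≤ ∑ j, ((M ^ (2 * k)) i0 j) := by
      have := hrows k i0
      rw [pow_mul, pow_two]; exact this
    rw [← NNReal.coe_le_coe]
    have hbk : ((b' ^ k : NNReal) : ℝ) = b ^ k := by
      rw [hb', NNReal.coe_pow, Real.coe_toNNReal b hb0]
    rw [hbk, h1]
    calc b ^ k ≤ ∑ j, ((M ^ (2 * k)) i0 j) := h4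
    _ = ((∑ j, ‖(A ^ (2 * k)) i0 j‖₊ : NNReal) : ℝ) := h3.symm
    _ ≤ _ := NNReal.coe_le_coe.mpr h2
  -- Gelfand's formula
  have gel := spectrum.pow_nnnorm_pow_one_div_tendsto_nhds_spectralRadius A
  have h2k : Filter.Tendsto (fun k : ℕ => 2 * k) Filter.atTop Filter.atTop :=
    Filter.tendsto_atTop_mono (fun k => by simp only [id_eq]; omega) Filter.tendsto_id
  have gel2 : Filter.Tendsto (fun k : ℕ => ((‖A ^ (2 * k)‖₊ : ENNReal) ^ (1 / (2 * k : ℕ) : ℝ)))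
      Filter.atTop (nhds (spectralRadius ℂ A)) := gel.comp h2k
  have hlow : ((b' : ENNReal) ^ (1/2 : ℝ)) ≤ spectralRadius ℂ A := by
    refine ge_of_tendsto gel2 ?_
    filter_upwards [Filter.eventually_ge_atTop 1] with k hk
    have hkne : (2 * k : ℕ) ≠ 0 := by omega
    calc ((b' : ENNReal) ^ (1/2 : ℝ))
        = ((b' : ENNReal) ^ ((k : ℝ) * (1 / (2 * k : ℕ) : ℝ))) := by
          have hk0 : (k : ℝ) ≠ 0 := Nat.cast_ne_zero.mpr (by omega)
          rw [show ((k : ℝ) * (1 / (2 * k : ℕ) : ℝ)) = 1/2 by push_cast; field_simp]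
    _ = (((b' : ENNReal) ^ (k : ℝ)) ^ (1 / (2 * k : ℕ) : ℝ)) := ENNReal.rpow_mul _ _ _
    _ = (((b' : ENNReal) ^ k) ^ (1 / (2 * k : ℕ) : ℝ)) := by rw [ENNReal.rpow_natCast]
    _ ≤ ((‖A ^ (2 * k)‖₊ : ENNReal) ^ (1 / (2 * k : ℕ) : ℝ)) := by
          apply ENNReal.rpow_le_rpow _ (by positivity)
          rw [← ENNReal.coe_pow]
          exact key k
  have hup : spectralRadius ℂ A ≤ ENNReal.ofReal (specRad M) := by
    rw [spectralRadius]
    refine iSup₂_le fun μ hμ => ?_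
    rw [← ENNReal.ofReal_coe_nnreal, coe_nnnorm]
    refine ENNReal.ofReal_le_ofReal ?_
    have : ‖μ‖ ∈ SS M := ⟨μ, hμ, rfl⟩
    exact le_csSup ⟨s, SS_bddAbove hM hs⟩ this
  have hfinal : ENNReal.ofReal (Real.sqrt b) ≤ ENNReal.ofReal (specRad M) := by
    refine le_trans ?_ (hlow.trans hup)
    rw [Real.sqrt_eq_rpow, ← ENNReal.ofReal_rpow_of_nonneg hb0 (by norm_num)]
    rfl
  exact (ENNReal.ofReal_le_ofReal_iff (specRad_nonneg hn hM hs)).mp hfinal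

end SpecAux


namespace CombAux

variable {n : ℕ} {G : Digraph (Fin n)}

lemma dwalk_zero (G : Digraph (Fin n)) (i : Fin n) : DWalk G i i 0 :=
  ⟨fun _ => i, rfl, rfl, fun l hl => absurd hl (by omega)⟩

lemma dwalk_one {i j : Fin n} (h : G.Adj i j) : DWalk G i j 1 :=
  ⟨fun m => if m = 0 then i else j, by simp, by simp, fun l hl => by
    have : l = 0 := by omega
    subst this; simpa using h⟩

lemma dwalk_nonempty (hsc : SConn G) (i j : Fin n) : {k : ℕ | DWalk G i j k}.Nonempty :=
  hsc i j

lemma ddist_walk (hsc : SConn G) (i j : Fin n) : DWalk G i j (ddist G i j) :=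
  Nat.sInf_mem (dwalk_nonempty hsc i j)

lemma ddist_le {i j : Fin n} {k : ℕ} (h : DWalk G i j k) : ddist G i j ≤ k :=
  Nat.sInf_le h

lemma ddist_self (G : Digraph (Fin n)) (i : Fin n) : ddist G i i = 0 :=
  Nat.le_zero.mp (ddist_le (dwalk_zero G i))

lemma ddist_eq_zero_iff (hsc : SConn G) {i j : Fin n} : ddist G i j = 0 ↔ i = j := by
  constructor
  · intro h
    have h0 : (0 : ℕ) ∈ {k : ℕ | DWalk G i j k} := by
      rw [← h]; exact ddist_walk hsc i j
    obtain ⟨f, hf0, hfk, -⟩ := h0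
    rw [← hf0, hfk]
  · rintro rfl; exact ddist_self G i

lemma ddist_pos (hsc : SConn G) {i j : Fin n} (h : i ≠ j) : 1 ≤ ddist G i j := by
  rcases Nat.eq_zero_or_pos (ddist G i j) with h0 | h1
  · exact absurd ((ddist_eq_zero_iff hsc).mp h0) h
  · exact h1

lemma adj_of_ddist_one {i j : Fin n} (hsc : SConn G) (h : ddist G i j = 1) : G.Adj i j := by
  have hw : DWalk G i j 1 := by rw [← h]; exact ddist_walk hsc i j
  obtain ⟨f, hf0, hfk, ha⟩ := hw
  have := ha 0 (by omega)
  rwa [hf0, hfk] at this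

lemma ddist_one_of_adj (hG : Loopless G) (hsc : SConn G) {i j : Fin n} (h : G.Adj i j) :
    ddist G i j = 1 := by
  have hne : i ≠ j := by rintro rfl; exact hG i h
  have h1 := ddist_le (dwalk_one h)
  have h2 := ddist_pos hsc hne
  omega

lemma gapfree (hsc : SConn G) (i j : Fin n) :
    ∀ t ≤ ddist G i j, ∃ w : Fin n, ddist G i w = t := by
  intro t ht
  obtain ⟨f, hf0, hfk, ha⟩ := ddist_walk hsc i j
  refine ⟨f t, le_antisymm ?_ ?_⟩
  · exact ddist_le ⟨f, hf0, rfl, fun l hl => ha l (by omega)⟩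
  · by_contra hlt
    push_neg at hlt
    set e := ddist G i (f t) with he
    obtain ⟨g, hg0, hgk, hga⟩ := ddist_walk hsc i (f t)
    -- build walk i → j of length e + (ddist G i j - t) < ddist G i j
    set d := ddist G i j with hd
    have : DWalk G i j (e + (d - t)) := by
      refine ⟨fun m => if m ≤ e then g m else f (t + (m - e)), by simp [hg0], ?_, ?_⟩
      · have hcase : e + (d - t) ≤ e ∨ ¬ (e + (d - t) ≤ e) := em _
        rcases Nat.eq_or_lt_of_le ht with rfl | htlt
        · simp only [Nat.sub_self, Nat.add_zero, if_pos le_rfl, hgk]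
          rw [← hfk]
          exact hgk
        · have : ¬ (e + (d - t) ≤ e) := by omega
          beta_reduce
          rw [if_neg this]
          have : t + (e + (d - t) - e) = d := by omega
          rw [this, hfk]
      · intro l hl
        beta_reduce
        by_cases h1 : l + 1 ≤ e
        · rw [if_pos (by omega), if_pos h1]
          exact hga l (by omega)
        · rw [if_neg h1]
          by_cases h2 : l ≤ e
          · have hle : l = e := by omega
            rw [if_pos h2, hle, hgk]
            have : t + (e + 1 - e) = t + 1 := by omega
            rw [this]
            have hfteq : g e = f t := by rw [hgk]
            exact hfteq ▸ (ha t (by omega))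
          · rw [if_neg h2]
            have e1 : t + (l + 1 - e) = (t + (l - e)) + 1 := by omega
            rw [e1]
            exact ha (t + (l - e)) (by omega)
    have hcon := ddist_le this
    omega

lemma ddist_lt (hn : 0 < n) (hsc : SConn G) (i j : Fin n) : ddist G i j < n := by
  set d := ddist G i j with hd
  have hch : ∀ t : Fin (d + 1), ∃ w : Fin n, ddist G i w = (t : ℕ) := fun t =>
    gapfree hsc i j t (by omega)
  choose w hw using hch
  have hinj : Function.Injective w := by
    intro a b hab
    have : (a : ℕ) = (b : ℕ) := by rw [← hw a, ← hw b, hab]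
    exact Fin.ext this
  have := Fintype.card_le_of_injective w hinj
  simp only [Fintype.card_fin] at this
  omega

end CombAux

namespace CombAux

variable {n : ℕ} {G : Digraph (Fin n)}

lemma sum_eq_erase (G : Digraph (Fin n)) (i : Fin n) :
    ∑ j, ddist G i j = ∑ j ∈ Finset.univ.erase i, ddist G i j := by
  rw [← Finset.sum_erase_add Finset.univ _ (Finset.mem_univ i), ddist_self, add_zero]

lemma transm_nat_lb (hsc : SConn G) (i : Fin n) : n - 1 ≤ ∑ j, ddist G i j := by
  rw [sum_eq_erase]
  calc n - 1 = (Finset.univ.erase i).card := by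
        rw [Finset.card_erase_of_mem (Finset.mem_univ i), Finset.card_univ, Fintype.card_fin]
  _ = ∑ j ∈ Finset.univ.erase i, 1 := by rw [Finset.card_eq_sum_ones]
  _ ≤ _ := Finset.sum_le_sum fun j hj => ddist_pos hsc (Finset.ne_of_mem_erase hj).symm

lemma transm_nat_lb_eq (h : ∀ j, j ≠ i → ddist G i j = 1) :
    ∑ j, ddist G i j = n - 1 := by
  rw [sum_eq_erase]
  calc ∑ j ∈ Finset.univ.erase i, ddist G i j = ∑ j ∈ Finset.univ.erase i, 1 :=
        Finset.sum_congr rfl fun j hj => h j (Finset.ne_of_mem_erase hj)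
  _ = (Finset.univ.erase i).card := (Finset.card_eq_sum_ones _).symm
  _ = n - 1 := by
        rw [Finset.card_erase_of_mem (Finset.mem_univ i), Finset.card_univ, Fintype.card_fin]

lemma transm_nat_lb_strict (hsc : SConn G) {i j0 : Fin n} (hj0 : j0 ≠ i)
    (h : ddist G i j0 ≠ 1) : n - 1 < ∑ j, ddist G i j := by
  rw [sum_eq_erase]
  have hcard : n - 1 = ∑ j ∈ Finset.univ.erase i, 1 := by
    rw [← Finset.card_eq_sum_ones, Finset.card_erase_of_mem (Finset.mem_univ i),
      Finset.card_univ, Fintype.card_fin]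
  rw [hcard]
  refine Finset.sum_lt_sum (fun j hj => ddist_pos hsc (Finset.ne_of_mem_erase hj).symm)
    ⟨j0, Finset.mem_erase.mpr ⟨hj0, Finset.mem_univ j0⟩, ?_⟩
  have := ddist_pos hsc hj0.symm
  omega

-- upper bound machinery, abstract in d
lemma count_ge {d : Fin n → ℕ} (hgap : ∀ j, ∀ t ≤ d j, ∃ w, d w = t)
    {t : ℕ} (ht : t < n) :
    t + 1 ≤ (Finset.univ.filter (fun j => d j ≤ t)).card := by
  by_cases hex : ∃ j0, t ≤ d j0
  · obtain ⟨j0, hj0⟩ := hex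
    have hch : ∀ s : Fin (t + 1), ∃ w, d w = (s : ℕ) := fun s => hgap j0 s (by omega)
    choose w hw using hch
    have hinj : Function.Injective w := fun a b hab => Fin.ext (by rw [← hw a, ← hw b, hab])
    have hmem : ∀ s, w s ∈ Finset.univ.filter (fun j => d j ≤ t) := fun s => by
      simp only [Finset.mem_filter, Finset.mem_univ, true_and, hw s]
      omega
    have himg : (Finset.univ.image w).card = t + 1 := by
      rw [Finset.card_image_of_injective _ hinj, Finset.card_univ, Fintype.card_fin]
    have hsub : Finset.univ.image w ⊆ Finset.univ.filter (fun j => d j ≤ t) := by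
      intro x hx
      obtain ⟨s, -, rfl⟩ := Finset.mem_image.mp hx
      exact hmem s
    calc t + 1 = (Finset.univ.image w).card := himg.symm
    _ ≤ _ := Finset.card_le_card hsub
  · push_neg at hex
    have : Finset.univ.filter (fun j => d j ≤ t) = Finset.univ := by
      refine Finset.filter_true_of_mem fun j _ => le_of_lt (hex j)
    rw [this, Finset.card_univ, Fintype.card_fin]
    omega

lemma count_le {d : Fin n → ℕ} (hgap : ∀ j, ∀ t ≤ d j, ∃ w, d w = t)
    {t : ℕ} (ht : t < n) :
    (Finset.univ.filter (fun j => t < d j)).card ≤ n - 1 - t := by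
  have hsplit := Finset.card_filter_add_card_filter_not
    (s := (Finset.univ : Finset (Fin n))) (p := fun j => t < d j)
  have hge := count_ge hgap ht
  have : Finset.univ.filter (fun j => ¬ t < d j) = Finset.univ.filter (fun j => d j ≤ t) := by
    apply Finset.filter_congr; intro j _; simp [not_lt]
  rw [this] at hsplit
  rw [Finset.card_univ, Fintype.card_fin] at hsplit
  omega

lemma sum_eq_count {d : Fin n → ℕ} (hlt : ∀ j, d j < n) :
    ∑ j, d j = ∑ t ∈ Finset.range n, (Finset.univ.filter (fun j => t < d j)).card := by
  have h1 : ∀ j, d j = ∑ t ∈ Finset.range n, if t < d j then 1 else 0 := by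
    intro j
    rw [← Finset.card_filter]
    have : (Finset.range n).filter (fun t => t < d j) = Finset.range (d j) := by
      ext t
      simp only [Finset.mem_filter, Finset.mem_range]
      constructor
      · rintro ⟨-, h⟩; exact h
      · intro h; exact ⟨lt_trans h (hlt j), h⟩
    rw [this, Finset.card_range]
  calc ∑ j, d j = ∑ j, ∑ t ∈ Finset.range n, if t < d j then 1 else 0 :=
        Finset.sum_congr rfl fun j _ => h1 j
  _ = ∑ t ∈ Finset.range n, ∑ j, if t < d j then 1 else 0 := Finset.sum_comm
  _ = _ := Finset.sum_congr rfl fun t _ => (Finset.card_filter _ _).symm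

lemma sum_ub {d : Fin n → ℕ} (hlt : ∀ j, d j < n)
    (hgap : ∀ j, ∀ t ≤ d j, ∃ w, d w = t) :
    ∑ j, d j ≤ ∑ t ∈ Finset.range n, t := by
  rw [sum_eq_count hlt, ← Finset.sum_range_reflect (fun t => t) n]
  exact Finset.sum_le_sum fun t ht => count_le hgap (Finset.mem_range.mp ht)

lemma sum_ub_strict (hn : 2 ≤ n) {d : Fin n → ℕ} (hlt : ∀ j, d j < n)
    (hgap : ∀ j, ∀ t ≤ d j, ∃ w, d w = t)
    (hni : ¬ Function.Injective d) :
    ∑ j, d j < ∑ t ∈ Finset.range n, t := by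
  -- max value of d is at most n - 2
  obtain ⟨jm, -, hjm⟩ := Finset.exists_max_image Finset.univ d ⟨⟨0, by omega⟩, Finset.mem_univ _⟩
  rw [Function.not_injective_iff] at hni
  obtain ⟨j1, j2, hd12, hne12⟩ := hni
  have hch : ∀ s : Fin (d jm + 1), ∃ w, d w = (s : ℕ) := fun s => hgap jm s (by omega)
  choose w hw using hch
  have hinj : Function.Injective w := fun a b hab => Fin.ext (by rw [← hw a, ← hw b, hab])
  have hmax : d jm ≤ n - 2 := by
    by_contra hcon
    push_neg at hcon
    have hdjm : d jm = n - 1 := by have := hlt jm; omega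
    -- j1 or j2 is not in the image of w; get n + 1 ≤ n
    have hj1 : d j1 ≤ d jm := hjm j1 (Finset.mem_univ _)
    have hnotboth : j1 ∉ Set.range w ∨ j2 ∉ Set.range w := by
      by_contra hcon2
      push_neg at hcon2
      obtain ⟨⟨s1, hs1⟩, ⟨s2, hs2⟩⟩ := hcon2
      have e1 : (s1 : ℕ) = d j1 := by rw [← hw s1, hs1]
      have e2 : (s2 : ℕ) = d j2 := by rw [← hw s2, hs2]
      have heq : s1 = s2 := Fin.ext (by rw [e1, e2, hd12])
      exact hne12 (by rw [← hs1, ← hs2, heq])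
    obtain hj | hj := hnotboth
    · have hcard := Fintype.card_le_of_injective
        (fun s : Option (Fin (d jm + 1)) => Option.elim s j1 w)
        ?_
      · simp only [Fintype.card_option, Fintype.card_fin] at hcard
        omega
      · rintro (_|a) (_|b) hab
        · rfl
        · exact absurd hab.symm (by simpa using fun h => hj ⟨b, h⟩)
        · exact absurd hab (by simpa using fun h => hj ⟨a, h⟩)
        · simp only [Option.elim] at hab
          rw [hinj hab]
    · have hcard := Fintype.card_le_of_injective
        (fun s : Option (Fin (d jm + 1)) => Option.elim s j2 w)
        ?_
      · simp only [Fintype.card_option, Fintype.card_fin] at hcard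
        omega
      · rintro (_|a) (_|b) hab
        · rfl
        · exact absurd hab.symm (by simpa using fun h => hj ⟨b, h⟩)
        · exact absurd hab (by simpa using fun h => hj ⟨a, h⟩)
        · simp only [Option.elim] at hab
          rw [hinj hab]
  -- now the count at t = n - 2 is zero
  rw [sum_eq_count hlt, ← Finset.sum_range_reflect (fun t => t) n]
  refine Finset.sum_lt_sum (fun t ht => count_le hgap (Finset.mem_range.mp ht)) ?_
  refine ⟨n - 2, Finset.mem_range.mpr (by omega), ?_⟩
  have hzero : Finset.univ.filter (fun j => n - 2 < d j) = ∅ := by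
    refine Finset.filter_false_of_mem fun j _ => ?_
    have := hjm j (Finset.mem_univ j)
    omega
  rw [hzero, Finset.card_empty]
  omega

lemma sum_ub_eq {d : Fin n → ℕ} (hlt : ∀ j, d j < n) (hinj : Function.Injective d) :
    ∑ j, d j = ∑ t ∈ Finset.range n, t := by
  have himg : Finset.univ.image d = Finset.range n := by
    apply Finset.eq_of_subset_of_card_le
    · intro x hx
      obtain ⟨j, -, rfl⟩ := Finset.mem_image.mp hx
      exact Finset.mem_range.mpr (hlt j)
    · rw [Finset.card_range, Finset.card_image_of_injective _ hinj, Finset.card_univ,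
        Fintype.card_fin]
  calc ∑ j, d j = ∑ x ∈ Finset.univ.image d, x := by
        rw [Finset.sum_image (fun a _ b _ h => hinj h)]
  _ = ∑ t ∈ Finset.range n, t := by rw [himg]

end CombAux

namespace CombAux

variable {n : ℕ} {G : Digraph (Fin n)}
open Fin.NatCast Fin.CommRing

def Cyc (n : ℕ) : Digraph (Fin n) :=
  Digraph.mk (fun i j => ((j : ℕ) = (i : ℕ) + 1) ∨ ((i : ℕ) = n - 1 ∧ (j : ℕ) = 0))

lemma cyc_adj [NeZero n] (hn : 2 ≤ n) (i j : Fin n) : (Cyc n).Adj i j ↔ j = i + 1 := by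
  have hv1 : ((1 : Fin n) : ℕ) = 1 := by
    rw [Fin.val_one', Nat.mod_eq_of_lt (by omega)]
  have hval : ((i + 1 : Fin n) : ℕ) = ((i : ℕ) + 1) % n := by
    rw [Fin.add_def, hv1]
  have hi := i.isLt
  have hj := j.isLt
  rw [Fin.ext_iff, hval]
  show ((j : ℕ) = (i : ℕ) + 1 ∨ ((i : ℕ) = n - 1 ∧ (j : ℕ) = 0)) ↔ _
  by_cases hc : (i : ℕ) = n - 1
  · have : ((i : ℕ) + 1) % n = 0 := by
      have : (i : ℕ) + 1 = n := by omega
      rw [this, Nat.mod_self]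
    rw [this]
    omega
  · have : ((i : ℕ) + 1) % n = (i : ℕ) + 1 := Nat.mod_eq_of_lt (by omega)
    rw [this]
    omega

lemma cyc_walk_end [NeZero n] (hn : 2 ≤ n) {u v : Fin n} {k : ℕ} (h : DWalk (Cyc n) u v k) :
    v = u + (k : Fin n) := by
  obtain ⟨f, hf0, hfk, ha⟩ := h
  have key : ∀ l ≤ k, f l = u + (l : Fin n) := by
    intro l hl
    induction l with
    | zero => simpa using hf0
    | succ m ih =>
      have hm := ih (by omega)
      have hadj := ha m (by omega)
      rw [cyc_adj hn] at hadj
      rw [hadj, hm]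
      push_cast
      ring
  rw [← hfk, key k le_rfl]

lemma cyc_walk [NeZero n] (hn : 2 ≤ n) (u : Fin n) (k : ℕ) : DWalk (Cyc n) u (u + (k : Fin n)) k := by
  refine ⟨fun l => u + (l : Fin n), by simp, rfl, fun l hl => ?_⟩
  rw [cyc_adj hn]
  push_cast
  ring

lemma cyc_ddist [NeZero n] (hn : 2 ≤ n) (u v : Fin n) : ddist (Cyc n) u v = ((v - u : Fin n) : ℕ) := by
  apply le_antisymm
  · have := cyc_walk hn u ((v - u : Fin n) : ℕ)
    rw [Fin.cast_val_eq_self, add_sub_cancel] at this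
    exact ddist_le this
  · refine le_csInf ⟨((v - u : Fin n) : ℕ), ?_⟩ ?_
    · have := cyc_walk hn u ((v - u : Fin n) : ℕ)
      rwa [Fin.cast_val_eq_self, add_sub_cancel] at this
    intro k (hk : DWalk (Cyc n) u v k)
    have := cyc_walk_end hn hk
    have hvu : v - u = (k : Fin n) := by rw [this]; ring
    calc ((v - u : Fin n) : ℕ) = ((k : Fin n) : ℕ) := by rw [hvu]
    _ = k % n := Fin.val_natCast k n
    _ ≤ k := Nat.mod_le k n

lemma cyc_ddist_inj [NeZero n] (hn : 2 ≤ n) (u : Fin n) :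
    Function.Injective (fun v => ddist (Cyc n) u v) := by
  intro a b hab
  simp only [cyc_ddist hn] at hab
  have : a - u = b - u := Fin.ext hab
  exact sub_left_injective this

end CombAux

namespace CombAux

variable {n : ℕ} {G : Digraph (Fin n)}

lemma fin_succ_val [NeZero n] (hn : 2 ≤ n) (l : Fin n) :
    ((l + 1 : Fin n) : ℕ) = if (l : ℕ) = n - 1 then 0 else (l : ℕ) + 1 := by
  have hv1 : ((1 : Fin n) : ℕ) = 1 := by
    rw [Fin.val_one', Nat.mod_eq_of_lt (by omega)]
  rw [Fin.add_def, hv1]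
  have hlt := l.isLt
  show ((l : ℕ) + 1) % n = _
  by_cases hc : (l : ℕ) = n - 1
  · rw [if_pos hc]
    have h2 : (l : ℕ) + 1 = n := by omega
    rw [h2]
    exact Nat.mod_self n
  · rw [if_neg hc]
    exact Nat.mod_eq_of_lt (by omega)

lemma exists_adj (hn : 2 ≤ n) (hsc : SConn G) (u : Fin n) : ∃ v, G.Adj u v := by
  obtain ⟨j, hj⟩ : ∃ j : Fin n, j ≠ u := by
    by_cases h0 : u = ⟨0, by omega⟩
    · refine ⟨⟨1, by omega⟩, ?_⟩
      rw [h0]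
      intro h
      simpa using Fin.ext_iff.mp h
    · exact ⟨⟨0, by omega⟩, fun h => h0 h.symm⟩
  have hd := ddist_pos hsc hj.symm
  obtain ⟨f, hf0, hfk, ha⟩ := ddist_walk hsc u j
  refine ⟨f 1, ?_⟩
  have := ha 0 (by omega)
  rwa [hf0] at this

lemma iso_of_inj (hn : 2 ≤ n) (hG : Loopless G) (hsc : SConn G)
    (hinj : ∀ i : Fin n, Function.Injective (fun j => ddist G i j)) :
    ∃ e : Fin n ≃ Fin n, ∀ i j, G.Adj i j ↔ (Cyc n).Adj (e i) (e j) := by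
  haveI : NeZero n := ⟨by omega⟩
  choose σ hσ using exists_adj hn hsc
  have huniq : ∀ u v, G.Adj u v → v = σ u := by
    intro u v h
    have h1 : ddist G u v = 1 := ddist_one_of_adj hG hsc h
    have h2 : ddist G u (σ u) = 1 := ddist_one_of_adj hG hsc (hσ u)
    exact hinj u (h1.trans h2.symm)
  have hdet : ∀ (k : ℕ) (u v : Fin n), DWalk G u v k → v = σ^[k] u := by
    intro k
    induction k with
    | zero =>
      rintro u v ⟨f, hf0, hfk, -⟩
      rw [Function.iterate_zero_apply, ← hf0, hfk]
    | succ m ih =>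
      rintro u v ⟨f, hf0, hfk, ha⟩
      have hm : f m = σ^[m] u := ih u (f m) ⟨f, hf0, rfl, fun l hl => ha l (by omega)⟩
      have hv : v = σ (f m) := by rw [← hfk]; exact huniq _ _ (ha m (by omega))
      rw [hv, hm]
      exact (Function.iterate_succ_apply' σ m u).symm
  have hreach : ∀ u v : Fin n, ∃ k, σ^[k] u = v := fun u v => by
    obtain ⟨k, hk⟩ := hsc u v
    exact ⟨k, (hdet k u v hk).symm⟩
  have hper : ∀ (u : Fin n) (p : ℕ), 1 ≤ p → σ^[p] u = u → n ≤ p := by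
    intro u p hp1 hpu
    have hqp : ∀ q, σ^[q * p] u = u := by
      intro q
      induction q with
      | zero => simp
      | succ m ih =>
        rw [show (m + 1) * p = m * p + p by ring, Function.iterate_add_apply, hpu, ih]
    have hsurj : Function.Surjective (fun s : Fin p => σ^[(s : ℕ)] u) := by
      intro v
      obtain ⟨k, hk⟩ := hreach u v
      refine ⟨⟨k % p, Nat.mod_lt k hp1⟩, ?_⟩
      calc σ^[(k % p : ℕ)] u = σ^[k % p] (σ^[(k / p) * p] u) := by rw [hqp]
      _ = σ^[k % p + k / p * p] u := (Function.iterate_add_apply σ _ _ u).symm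
      _ = σ^[k] u := by
            congr 1
            exact Nat.mod_add_div' k p
      _ = v := hk
    have := Fintype.card_le_of_surjective _ hsurj
    simpa using this
  set i0 : Fin n := ⟨0, by omega⟩ with hi0
  set eh : Fin n → Fin n := fun l => σ^[(l : ℕ)] i0 with heh
  have hkey : ∀ a b : Fin n, (a : ℕ) < (b : ℕ) → eh a ≠ eh b := by
    intro a b hlt heq
    have hsplit : σ^[((b : ℕ) - (a : ℕ))] (eh a) = eh a := by
      have : eh b = σ^[(b : ℕ) - (a : ℕ)] (eh a) := by
        rw [heh]
        show σ^[(b : ℕ)] i0 = σ^[(b : ℕ) - (a : ℕ)] (σ^[(a : ℕ)] i0)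
        rw [← Function.iterate_add_apply]
        congr 1
        omega
      rw [← this, ← heq]
    have := hper (eh a) ((b : ℕ) - (a : ℕ)) (by omega) hsplit
    have := b.isLt
    omega
  have hinj2 : Function.Injective eh := by
    intro a b hab
    by_contra hne
    have hne' : (a : ℕ) ≠ (b : ℕ) := fun h => hne (Fin.ext h)
    rcases Nat.lt_or_ge (a : ℕ) (b : ℕ) with h | h
    · exact hkey a b h hab
    · exact hkey b a (by omega) hab.symm
  have hbij : Function.Bijective eh :=
    (Fintype.bijective_iff_injective_and_card eh).mpr ⟨hinj2, rfl⟩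
  have hcycle : σ^[n] i0 = i0 := by
    obtain ⟨k, hk⟩ := hbij.2 (σ^[n] i0)
    rcases Nat.eq_zero_or_pos (k : ℕ) with h0 | hpos
    · rw [← hk, heh]
      show σ^[(k : ℕ)] i0 = i0
      rw [h0, Function.iterate_zero_apply]
    · exfalso
      have hkn := k.isLt
      have hsplit : σ^[n - (k : ℕ)] (σ^[(k : ℕ)] i0) = σ^[(k : ℕ)] i0 := by
        rw [← Function.iterate_add_apply]
        have : n - (k : ℕ) + (k : ℕ) = n := by omega
        rw [this]
        exact hk ▸ rfl
      have := hper (σ^[(k : ℕ)] i0) (n - (k : ℕ)) (by omega) hsplit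
      omega
  have hshift : ∀ l : Fin n, σ (eh l) = eh (l + 1) := by
    intro l
    show σ (σ^[(l : ℕ)] i0) = σ^[((l + 1 : Fin n) : ℕ)] i0
    rw [← Function.iterate_succ_apply' σ (l : ℕ) i0, fin_succ_val hn l]
    by_cases hc : (l : ℕ) = n - 1
    · rw [if_pos hc]
      have h2 : (l : ℕ) + 1 = n := by have := l.isLt; omega
      have h3 : ((l : ℕ)).succ = n := h2
      rw [h3, Function.iterate_zero_apply]
      exact hcycle
    · rw [if_neg hc]
  set E := Equiv.ofBijective eh hbij with hE
  refine ⟨E.symm, fun u v => ?_⟩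
  have hu : eh (E.symm u) = u := E.apply_symm_apply u
  have hv : eh (E.symm v) = v := E.apply_symm_apply v
  rw [cyc_adj hn]
  constructor
  · intro h
    have h1 : v = σ u := huniq u v h
    rw [← hu, hshift] at h1
    apply hinj2
    rw [hv, h1]
  · intro h
    have h1 : v = eh (E.symm u + 1) := by rw [← h, hv]
    rw [← hshift, hu] at h1
    rw [h1]
    exact hσ u

end CombAux


set_option maxHeartbeats 2000000

theorem stmt7 {n : ℕ} (hn : 2 ≤ n) (G : Digraph (Fin n)) (hG : Loopless G) (hsc : SConn G)
    (α : ℝ) (h0 : 0 ≤ α) (h1 : α < 1) :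
    ((n : ℝ) - 1 ≤ mualpha α G ∧ mualpha α G ≤ (n : ℝ) * ((n : ℝ) - 1) / 2) ∧
    (mualpha α G = (n : ℝ) - 1 ↔ ∀ i j : Fin n, G.Adj i j ↔ i ≠ j) ∧
    (mualpha α G = (n : ℝ) * ((n : ℝ) - 1) / 2 ↔
      IsoD G (Digraph.mk (fun i j =>
        ((j : ℕ) = (i : ℕ) + 1) ∨ ((i : ℕ) = n - 1 ∧ (j : ℕ) = 0)))) := by
  classical
  haveI : NeZero n := ⟨by omega⟩
  open SpecAux CombAux in
  have hn0 : 0 < n := by omega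
  set M := Dalpha α G with hMdef
  -- basic distance facts
  have hdd_lt : ∀ i j : Fin n, ddist G i j < n := fun i j => CombAux.ddist_lt hn0 hsc i j
  have hgap : ∀ i : Fin n, ∀ j, ∀ t ≤ ddist G i j, ∃ w, ddist G i w = t :=
    fun i => CombAux.gapfree hsc i
  have hgap' : ∀ i : Fin n, ∀ j : Fin n, ∀ t ≤ (fun j => ddist G i j) j,
      ∃ w, (fun j => ddist G i j) w = t := fun i j t ht => hgap i j t ht
  set T : ℝ := (n : ℝ) * ((n : ℝ) - 1) / 2 with hTdef
  set B : ℕ := ∑ t ∈ Finset.range n, t with hBdef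
  have hBT : (B : ℝ) = T := by
    have h2 := Finset.sum_range_id_mul_two n
    have hc := congrArg (Nat.cast : ℕ → ℝ) h2
    push_cast [Nat.cast_sub (by omega : 1 ≤ n)] at hc
    rw [hTdef, hBdef]
    push_cast
    linarith
  have htr_cast : ∀ i, transm G i = ((∑ j, ddist G i j : ℕ) : ℝ) := by
    intro i
    rw [transm]
    push_cast
    rfl
  have hT1 : (1 : ℝ) ≤ T := by
    rw [hTdef]
    have h2 : (2 : ℝ) ≤ (n : ℝ) := by exact_mod_cast hn
    nlinarith
  have hn1 : (1 : ℝ) ≤ (n : ℝ) - 1 := by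
    have h2 : (2 : ℝ) ≤ (n : ℝ) := by exact_mod_cast hn
    linarith
  -- transmission bounds
  have htl : ∀ i, (n : ℝ) - 1 ≤ transm G i := by
    intro i
    rw [htr_cast i]
    have := CombAux.transm_nat_lb hsc i
    have hcast : ((n - 1 : ℕ) : ℝ) = (n : ℝ) - 1 := by
      push_cast [Nat.cast_sub (by omega : 1 ≤ n)]
      ring
    rw [← hcast]
    exact_mod_cast this
  have htu : ∀ i, transm G i ≤ T := by
    intro i
    rw [htr_cast i, ← hBT]
    exact_mod_cast CombAux.sum_ub (d := fun j => ddist G i j) (fun j => hdd_lt i j) (hgap' i)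
  have htr0 : ∀ i, 0 ≤ transm G i := fun i => le_trans (by linarith) (htl i)
  -- matrix entries
  have hent : ∀ i j, 0 ≤ M i j := by
    intro i j
    rw [hMdef, Dalpha, Matrix.add_apply, Matrix.smul_apply, Matrix.smul_apply, Matrix.of_apply]
    have h1 : 0 ≤ α • Matrix.diagonal (transm G) i j := by
      rw [Matrix.diagonal_apply, smul_eq_mul]
      by_cases h : i = j
      · rw [if_pos h]; exact mul_nonneg h0 (htr0 _)
      · rw [if_neg h]; simp
    have h2 : (0 : ℝ) ≤ (1 - α) • ((ddist G i j : ℝ)) := by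
      rw [smul_eq_mul]
      exact mul_nonneg (by linarith) (by positivity)
    exact add_nonneg h1 h2
  have hoff : ∀ i j, i ≠ j → 1 - α ≤ M i j := by
    intro i j hij
    rw [hMdef, Dalpha, Matrix.add_apply, Matrix.smul_apply, Matrix.smul_apply, Matrix.of_apply,
      Matrix.diagonal_apply, if_neg hij]
    have hd1 : (1 : ℝ) ≤ (ddist G i j : ℝ) := by exact_mod_cast CombAux.ddist_pos hsc hij
    have : 1 - α ≤ (1 - α) * (ddist G i j : ℝ) := by nlinarith
    simpa using this
  have hrow : ∀ i, ∑ j, M i j = transm G i := by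
    intro i
    rw [hMdef, Dalpha]
    simp only [Matrix.add_apply, Matrix.smul_apply, Matrix.of_apply, smul_eq_mul]
    rw [Finset.sum_add_distrib]
    have hdiag : ∑ j, α * Matrix.diagonal (transm G) i j = α * transm G i := by
      rw [← Finset.mul_sum]
      congr 1
      rw [Finset.sum_eq_single i (fun b _ hb => Matrix.diagonal_apply_ne' _ hb)
        (fun h => absurd (Finset.mem_univ i) h)]
      exact Matrix.diagonal_apply_eq _ i
    have hrest : ∑ j, (1 - α) * (ddist G i j : ℝ) = (1 - α) * transm G i := by
      unfold transm
      rw [← Finset.mul_sum]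
    rw [hdiag, hrest]
    ring
  have hrowT : ∀ i, ∑ j, M i j ≤ T := fun i => (hrow i) ▸ htu i
  have hMM : ∀ i, ∑ j, (M * M) i j = ∑ l, M i l * transm G l := by
    intro i
    simp_rw [Matrix.mul_apply]
    rw [Finset.sum_comm]
    exact Finset.sum_congr rfl fun l _ => by rw [← Finset.mul_sum, hrow l]
  have hMMent : ∀ i j, 0 ≤ (M * M) i j := by
    intro i j
    rw [Matrix.mul_apply]
    exact Finset.sum_nonneg fun l _ => mul_nonneg (hent i l) (hent l j)
  have hmu : mualpha α G = specRad M := rfl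
  -- part 1 bounds
  have hub : mualpha α G ≤ T := by
    rw [hmu]
    exact SpecAux.specRad_le hn0 hent hrowT
  have hlb : (n : ℝ) - 1 ≤ mualpha α G := by
    rw [hmu]
    have hb : ∀ i, ((n : ℝ) - 1) ^ 2 ≤ ∑ j, (M * M) i j := by
      intro i
      rw [hMM i]
      calc ((n : ℝ) - 1) ^ 2 ≤ ((n : ℝ) - 1) * transm G i := by nlinarith [htl i]
      _ = ∑ l, M i l * ((n : ℝ) - 1) := by rw [← Finset.sum_mul, hrow i]; ring
      _ ≤ ∑ l, M i l * transm G l :=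
          Finset.sum_le_sum fun l _ => mul_le_mul_of_nonneg_left (htl l) (hent i l)
    have := SpecAux.specRad_ge hn0 hent (by positivity) hb hrowT
    rwa [Real.sqrt_sq (by linarith)] at this
  -- key equal-rowsum results
  have hconst_eq : ∀ s : ℝ, 0 ≤ s → (∀ i, transm G i = s) → mualpha α G = s := by
    intro s hs0 hconst
    have hrows : ∀ i, ∑ j, M i j = s := fun i => (hrow i).trans (hconst i)
    have hMMs : ∀ i, s ^ 2 ≤ ∑ j, (M * M) i j := by
      intro i
      rw [hMM i]
      have : ∑ l, M i l * transm G l = s * s := by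
        calc ∑ l, M i l * transm G l = ∑ l, M i l * s := by
              exact Finset.sum_congr rfl fun l _ => by rw [hconst l]
        _ = s * s := by rw [← Finset.sum_mul, hrows i]
      rw [this]; nlinarith
    have h1 : mualpha α G ≤ s := SpecAux.specRad_le hn0 hent (fun i => le_of_eq (hrows i))
    have h2 : s ≤ mualpha α G := by
      have := SpecAux.specRad_ge hn0 hent (by positivity) hMMs (fun i => le_of_eq (hrows i))
      rwa [Real.sqrt_sq hs0] at this
    linarith
  -- strict lower improvement when some transmission exceeds n-1
  have hstrict_low : ∀ i0 : Fin n, (n : ℝ) - 1 < transm G i0 → (n : ℝ) - 1 < mualpha α G := by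
    intro i0 hgt
    set δ : ℝ := transm G i0 - ((n : ℝ) - 1) with hδ
    have hδpos : 0 < δ := by rw [hδ]; linarith
    set c : ℝ := min (1 - α) ((n : ℝ) - 1) * δ with hc
    have hcpos : 0 < c := by
      apply mul_pos _ hδpos
      apply lt_min (by linarith) (by linarith)
    have hb : ∀ i, ((n : ℝ) - 1) ^ 2 + c ≤ ∑ j, (M * M) i j := by
      intro i
      rw [hMM i]
      have hsplit : ∑ l, M i l * transm G l
          = ∑ l, M i l * ((n : ℝ) - 1) + ∑ l, M i l * (transm G l - ((n : ℝ) - 1)) := by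
        rw [← Finset.sum_add_distrib]
        exact Finset.sum_congr rfl fun l _ => by ring
      rw [hsplit]
      have h1 : ((n : ℝ) - 1) * transm G i ≤ ∑ l, M i l * ((n : ℝ) - 1) := by
        rw [← Finset.sum_mul, hrow i]; linarith [mul_comm ((n : ℝ) - 1) (transm G i)]
      have h2 : M i i0 * δ ≤ ∑ l, M i l * (transm G l - ((n : ℝ) - 1)) := by
        refine Finset.single_le_sum (f := fun l => M i l * (transm G l - ((n : ℝ) - 1)))
          (fun l _ => mul_nonneg (hent i l) (by linarith [htl l])) (Finset.mem_univ i0)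
      by_cases hcase : i = i0
      · have heq2 : ((n : ℝ) - 1) * transm G i = ((n : ℝ) - 1) ^ 2 + ((n : ℝ) - 1) * δ := by
          rw [hcase, hδ]; ring
        have hmin : c ≤ ((n : ℝ) - 1) * δ := by
          rw [hc]
          exact mul_le_mul_of_nonneg_right (min_le_right _ _) (le_of_lt hδpos)
        have h3 : 0 ≤ M i i0 * δ := mul_nonneg (hent i i0) (le_of_lt hδpos)
        linarith
      · have hmin : c ≤ M i i0 * δ := by
          rw [hc]
          exact mul_le_mul_of_nonneg_right ((min_le_left _ _).trans (hoff i i0 hcase))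
            (le_of_lt hδpos)
        have h3 : ((n : ℝ) - 1) ^ 2 ≤ ((n : ℝ) - 1) * transm G i := by nlinarith [htl i]
        nlinarith
    have := SpecAux.specRad_ge hn0 hent (by positivity) hb hrowT
    calc (n : ℝ) - 1 = Real.sqrt (((n : ℝ) - 1) ^ 2) := (Real.sqrt_sq (by linarith)).symm
    _ < Real.sqrt (((n : ℝ) - 1) ^ 2 + c) := by
        apply Real.sqrt_lt_sqrt (by positivity)
        linarith
    _ ≤ mualpha α G := this
  -- strict upper improvement when some transmission is below T
  have hstrict_up : ∀ i0 : Fin n, transm G i0 < T → mualpha α G < T := by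
    intro i0 hlt
    set δ : ℝ := T - transm G i0 with hδ
    have hδpos : 0 < δ := by rw [hδ]; linarith
    set c : ℝ := min (1 - α) T * δ with hc
    have hcpos : 0 < c := by
      apply mul_pos _ hδpos
      apply lt_min (by linarith) (by linarith)
    have hb : ∀ i, ∑ j, (M * M) i j ≤ T ^ 2 - c := by
      intro i
      rw [hMM i]
      have hsplit : ∑ l, M i l * transm G l
          = ∑ l, M i l * T - ∑ l, M i l * (T - transm G l) := by
        rw [← Finset.sum_sub_distrib]
        exact Finset.sum_congr rfl fun l _ => by ring
      rw [hsplit]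
      have h1 : ∑ l, M i l * T = transm G i * T := by rw [← Finset.sum_mul, hrow i]
      have h2 : M i i0 * δ ≤ ∑ l, M i l * (T - transm G l) := by
        refine Finset.single_le_sum (f := fun l => M i l * (T - transm G l))
          (fun l _ => mul_nonneg (hent i l) (by linarith [htu l])) (Finset.mem_univ i0)
      by_cases hcase : i = i0
      · have hmin : c ≤ T * δ := by
          rw [hc]
          exact mul_le_mul_of_nonneg_right (min_le_right _ _) (le_of_lt hδpos)
        have h3 : 0 ≤ M i i0 * δ := mul_nonneg (hent i i0) (le_of_lt hδpos)
        have h4 : transm G i * T = T ^ 2 - T * δ := by rw [hcase, hδ]; ring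
        linarith
      · have hmin : c ≤ M i i0 * δ := by
          rw [hc]
          exact mul_le_mul_of_nonneg_right ((min_le_left _ _).trans (hoff i i0 hcase))
            (le_of_lt hδpos)
        have h3 : transm G i * T ≤ T ^ 2 := by nlinarith [htu i, htr0 i]
        nlinarith
    have hle := SpecAux.specRad_sq_le hn0 hMMent hb
    rw [hmu]
    have h0b : 0 ≤ T ^ 2 - c :=
      le_trans (Finset.sum_nonneg fun j _ => hMMent i0 j) (hb i0)
    calc specRad M ≤ Real.sqrt (T ^ 2 - c) := hle
    _ < Real.sqrt (T ^ 2) := by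
        apply Real.sqrt_lt_sqrt h0b
        linarith
    _ = T := Real.sqrt_sq (by linarith)
  refine ⟨⟨hlb, hub⟩, ?_, ?_⟩
  · -- complete digraph characterization
    constructor
    · intro heq
      by_contra hnc
      push_neg at hnc
      obtain ⟨i, j, hij⟩ := hnc
      have hviol : ¬ G.Adj i j ∧ i ≠ j := by
        rcases hij with ⟨ha, he⟩ | h
        · exact absurd (he ▸ ha) (hG j)
        · exact h
      have hd1 : ddist G i j ≠ 1 := fun h => hviol.1 (CombAux.adj_of_ddist_one hsc h)
      have hstrict := CombAux.transm_nat_lb_strict hsc (Ne.symm hviol.2) hd1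
      have : (n : ℝ) - 1 < transm G i := by
        rw [htr_cast i]
        have hcast : ((n - 1 : ℕ) : ℝ) = (n : ℝ) - 1 := by
          push_cast [Nat.cast_sub (by omega : 1 ≤ n)]
          ring
        rw [← hcast]
        exact_mod_cast hstrict
      have := hstrict_low i this
      linarith [heq ▸ this]
    · intro hcomp
      have hconst : ∀ i, transm G i = (n : ℝ) - 1 := by
        intro i
        rw [htr_cast i, CombAux.transm_nat_lb_eq (i := i) ?_]
        · push_cast [Nat.cast_sub (by omega : 1 ≤ n)]
          ring
        · intro j hj
          exact CombAux.ddist_one_of_adj hG hsc ((hcomp i j).mpr (Ne.symm hj))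
      exact hconst_eq ((n : ℝ) - 1) (by linarith) hconst
  · -- cycle characterization
    constructor
    · intro heq
      by_cases hinj : ∀ i : Fin n, Function.Injective (fun j => ddist G i j)
      · obtain ⟨e, he⟩ := CombAux.iso_of_inj hn hG hsc hinj
        exact ⟨e, he⟩
      · exfalso
        push_neg at hinj
        obtain ⟨i0, hni⟩ := hinj
        have hstrict := CombAux.sum_ub_strict hn (d := fun j => ddist G i0 j)
          (fun j => hdd_lt i0 j) (hgap' i0) hni
        have : transm G i0 < T := by
          rw [htr_cast i0, ← hBT]
          exact_mod_cast hstrict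
        have := hstrict_up i0 this
        linarith [heq ▸ this]
    · rintro ⟨e, he⟩
      have hddmap : ∀ i j : Fin n, ddist G i j = ddist (CombAux.Cyc n) (e i) (e j) := by
        intro i j
        have hfor : ∀ k, DWalk G i j k → DWalk (CombAux.Cyc n) (e i) (e j) k := by
          rintro k ⟨f, hf0, hfk, ha⟩
          exact ⟨e ∘ f, by simp [hf0], by simp [hfk],
            fun l hl => (he (f l) (f (l + 1))).mp (ha l hl)⟩
        have hback : ∀ k, DWalk (CombAux.Cyc n) (e i) (e j) k → DWalk G i j k := by
          rintro k ⟨f, hf0, hfk, ha⟩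
          refine ⟨(e.symm) ∘ f, by simp [hf0], by simp [hfk], fun l hl => ?_⟩
          have := ha l hl
          have h2 := (he (e.symm (f l)) (e.symm (f (l + 1)))).mpr
          simp only [Equiv.apply_symm_apply] at h2
          exact h2 this
        unfold ddist
        congr 1
        ext k
        exact ⟨hfor k, hback k⟩
      have hconst : ∀ i, transm G i = T := by
        intro i
        rw [htr_cast i]
        have hsum : ∑ j, ddist G i j = ∑ v, ddist (CombAux.Cyc n) (e i) v := by
          calc ∑ j, ddist G i j = ∑ j, ddist (CombAux.Cyc n) (e i) (e j) :=
                Finset.sum_congr rfl fun j _ => hddmap i j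
          _ = ∑ v, ddist (CombAux.Cyc n) (e i) v := Equiv.sum_comp e _
        rw [hsum, CombAux.sum_ub_eq (d := fun v => ddist (CombAux.Cyc n) (e i) v) ?_ ?_, hBT]
        · intro v
          show ddist (CombAux.Cyc n) (e i) v < n
          rw [CombAux.cyc_ddist hn]
          exact (v - e i).isLt
        · exact CombAux.cyc_ddist_inj hn (e i)
      exact hconst_eq T (by linarith) hconst
end

section
/- For integers n, k, m with 1 ≤ k ≤ n-2 and 1 ≤ m ≤ n-k-1, and 0 ≤ α < 1, the D_α spectral radius of the digraph K(n,k,m) equals (αm + αn + n - 2 + sqrt((1-α)²n² + (2α²-6α+4)mn + (α²+4α-4)m² - 4(1-α)km))/2. -/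
open Matrix BigOperators

section Aux

lemma KD_adj {n k m : ℕ} {i j : Fin n} :
    (KD n k m).Adj i j ↔ i ≠ j ∧ ¬(k + m ≤ (i : ℕ) ∧ k ≤ (j : ℕ) ∧ (j : ℕ) < k + m) :=
  Iff.rfl

lemma mem_spec_iff {n : ℕ} (A : Matrix (Fin n) (Fin n) ℂ) (lam : ℂ) :
    lam ∈ spectrum ℂ A ↔ ∃ v : Fin n → ℂ, v ≠ 0 ∧ A.mulVec v = lam • v := by
  rw [spectrum.mem_iff, Matrix.isUnit_iff_isUnit_det, isUnit_iff_ne_zero, not_not,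
      ← Matrix.exists_mulVec_eq_zero_iff]
  constructor
  · rintro ⟨v, hv, hveq⟩
    refine ⟨v, hv, ?_⟩
    rw [Matrix.sub_mulVec, sub_eq_zero] at hveq
    rw [← hveq, Algebra.algebraMap_eq_smul_one, Matrix.smul_mulVec, Matrix.one_mulVec]
  · rintro ⟨v, hv, hveq⟩
    refine ⟨v, hv, ?_⟩
    rw [Matrix.sub_mulVec, Algebra.algebraMap_eq_smul_one, Matrix.smul_mulVec,
      Matrix.one_mulVec, hveq, sub_self]

lemma specRad_eq_of_posEig {n : ℕ} (hn : 0 < n) (M : Matrix (Fin n) (Fin n) ℝ)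
    (hM : ∀ i j, 0 ≤ M i j) (u : Fin n → ℝ) (hu : ∀ i, 0 < u i) (μ : ℝ)
    (hMu : M.mulVec u = μ • u) : specRad M = μ := by
  set A : Matrix (Fin n) (Fin n) ℂ := M.map (fun x => (x : ℂ)) with hA
  have hrow : ∀ i, ∑ j, M i j * u j = μ * u i := by
    intro i
    have := congrFun hMu i
    simpa [Matrix.mulVec, dotProduct] using this
  have hAeig : A.mulVec (fun i => (u i : ℂ)) = (μ : ℂ) • (fun i => (u i : ℂ)) := by
    funext i
    have := hrow i
    simp only [hA, Matrix.mulVec, dotProduct, Matrix.map_apply, Pi.smul_apply,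
      smul_eq_mul]
    exact_mod_cast this
  have hμmem : (μ : ℂ) ∈ spectrum ℂ A := by
    refine (mem_spec_iff A μ).2 ⟨fun i => (u i : ℂ), ?_, hAeig⟩
    intro h
    have := congrFun h ⟨0, hn⟩
    simp only [Pi.zero_apply, Complex.ofReal_eq_zero] at this
    exact absurd this (ne_of_gt (hu _))
  have hbound : ∀ lam : ℂ, lam ∈ spectrum ℂ A → ‖lam‖ ≤ μ := by
    intro lam hlam
    obtain ⟨v, hv, hveq⟩ := (mem_spec_iff A lam).1 hlam
    obtain ⟨i0, -, hmax⟩ := Finset.exists_max_image Finset.univ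
      (fun i => ‖v i‖ / u i) ⟨⟨0, hn⟩, Finset.mem_univ _⟩
    set t : ℝ := ‖v i0‖ / u i0 with ht
    have hvj : ∀ j, ‖v j‖ ≤ t * u j := by
      intro j
      have := hmax j (Finset.mem_univ _)
      exact (div_le_iff₀ (hu j)).1 this
    have htpos : 0 < t := by
      obtain ⟨j, hj⟩ := Function.ne_iff.1 hv
      have h1 : 0 < ‖v j‖ / u j := by
        apply div_pos _ (hu j)
        simpa using hj
      exact lt_of_lt_of_le h1 (hmax j (Finset.mem_univ _))
    have hvi0 : ‖v i0‖ = t * u i0 := by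
      rw [ht, div_mul_cancel₀ _ (hu i0).ne']
    have hrowc : ∑ j, (M i0 j : ℂ) * v j = lam * v i0 := by
      have := congrFun hveq i0
      simpa [hA, Matrix.mulVec, dotProduct, Matrix.map_apply] using this
    have habs : ‖lam‖ * ‖v i0‖ ≤ μ * (‖v i0‖) := by
      calc ‖lam‖ * ‖v i0‖
          = ‖lam * v i0‖ := (norm_mul _ _).symm
        _ = ‖∑ j, (M i0 j : ℂ) * v j‖ := by rw [hrowc]
        _ ≤ ∑ j, ‖(M i0 j : ℂ) * v j‖ := norm_sum_le _ _
        _ = ∑ j, M i0 j * ‖v j‖ := by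
            refine Finset.sum_congr rfl fun j _ => ?_
            rw [norm_mul, Complex.norm_real, Real.norm_of_nonneg (hM i0 j)]
        _ ≤ ∑ j, M i0 j * (t * u j) := by
            refine Finset.sum_le_sum fun j _ => ?_
            exact mul_le_mul_of_nonneg_left (hvj j) (hM i0 j)
        _ = t * ∑ j, M i0 j * u j := by
            rw [Finset.mul_sum]; exact Finset.sum_congr rfl fun j _ => by ring
        _ = t * (μ * u i0) := by rw [hrow i0]
        _ = μ * (‖v i0‖) := by rw [hvi0]; ring
    have hpos : 0 < ‖v i0‖ := by
      rw [hvi0]; exact mul_pos htpos (hu i0)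
    exact le_of_mul_le_mul_right habs hpos
  have hμ0 : 0 ≤ μ := by
    have := hbound _ hμmem
    rw [Complex.norm_real, Real.norm_eq_abs] at this
    exact le_trans (abs_nonneg μ) this
  have hμS : μ ∈ {r : ℝ | ∃ lam ∈ spectrum ℂ (M.map (fun x => (x : ℂ))), r = ‖lam‖} :=
    ⟨(μ : ℂ), hμmem, by rw [Complex.norm_real, Real.norm_eq_abs, abs_of_nonneg hμ0]⟩
  have hub : ∀ r ∈ {r : ℝ | ∃ lam ∈ spectrum ℂ (M.map (fun x => (x : ℂ))), r = ‖lam‖},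
      r ≤ μ := by
    rintro r ⟨lam, hlam, rfl⟩
    exact hbound lam hlam
  refine le_antisymm (csSup_le ⟨μ, hμS⟩ hub) (le_csSup ⟨μ, hub⟩ hμS)

lemma ddist_KD {n k m : ℕ} (hk : 1 ≤ k) (i j : Fin n) :
    ddist (KD n k m) i j =
      if i = j then 0 else
        if k + m ≤ (i : ℕ) ∧ k ≤ (j : ℕ) ∧ (j : ℕ) < k + m then 2 else 1 := by
  by_cases hij : i = j
  · simp only [hij, if_pos rfl]
    apply Nat.sInf_eq_zero.2
    left
    exact ⟨fun _ => j, rfl, rfl, fun l hl => absurd hl (Nat.not_lt_zero l)⟩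
  · rw [if_neg hij]
    have hij' : (i : ℕ) ≠ (j : ℕ) := fun h => hij (Fin.ext h)
    have h0 : 0 ∉ {t : ℕ | DWalk (KD n k m) i j t} := by
      rintro ⟨f, hf0, hfk, -⟩
      exact hij (hf0 ▸ hfk ▸ rfl)
    by_cases hbad : k + m ≤ (i : ℕ) ∧ k ≤ (j : ℕ) ∧ (j : ℕ) < k + m
    · rw [if_pos hbad]
      have h1 : 1 ∉ {t : ℕ | DWalk (KD n k m) i j t} := by
        rintro ⟨f, hf0, hfk, hadj⟩
        have := hadj 0 (by norm_num)
        rw [hf0] at this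
        rw [show (0:ℕ)+1 = 1 from rfl, hfk] at this
        exact this.2 hbad
      have h2 : 2 ∈ {t : ℕ | DWalk (KD n k m) i j t} := by
        refine ⟨fun l => if l = 0 then i else if l = 1 then ⟨0, by omega⟩ else j, rfl, rfl, ?_⟩
        intro l hl
        interval_cases l <;>
        · norm_num [KD_adj, Fin.ext_iff]
          omega
      have hd : sInf {t : ℕ | DWalk (KD n k m) i j t} = 2 := by
        have hmem := Nat.sInf_mem (⟨2, h2⟩ : {t : ℕ | DWalk (KD n k m) i j t}.Nonempty)
        have hle := Nat.sInf_le h2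
        set d := sInf {t : ℕ | DWalk (KD n k m) i j t}
        interval_cases d
        · exact absurd hmem h0
        · exact absurd hmem h1
        · rfl
      exact hd
    · rw [if_neg hbad]
      have h1 : 1 ∈ {t : ℕ | DWalk (KD n k m) i j t} := by
        refine ⟨fun l => if l = 0 then i else j, rfl, rfl, ?_⟩
        intro l hl
        interval_cases l
        norm_num [KD_adj, Fin.ext_iff]
        omega
      have hd : sInf {t : ℕ | DWalk (KD n k m) i j t} = 1 := by
        have hmem := Nat.sInf_mem (⟨1, h1⟩ : {t : ℕ | DWalk (KD n k m) i j t}.Nonempty)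
        have hle := Nat.sInf_le h1
        set d := sInf {t : ℕ | DWalk (KD n k m) i j t}
        interval_cases d
        · exact absurd hmem h0
        · rfl
      exact hd

lemma sum_ind {n : ℕ} (p : ℕ → Prop) [DecidablePred p] :
    ∑ j : Fin n, (if p (j : ℕ) then (1 : ℝ) else 0) =
      ((Finset.range n).filter p).card := by
  rw [Fin.sum_univ_eq_sum_range (fun j => if p j then (1 : ℝ) else 0) n, Finset.sum_boole]

lemma card_window {n a b : ℕ} (hb : b ≤ n) :
    ((Finset.range n).filter (fun j => a ≤ j ∧ j < b)).card = b - a := by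
  have h : (Finset.range n).filter (fun j => a ≤ j ∧ j < b) = Finset.Ico a b := by
    ext x
    simp only [Finset.mem_filter, Finset.mem_range, Finset.mem_Ico]
    omega
  rw [h, Nat.card_Ico]

lemma card_lt {n b : ℕ} (hb : b ≤ n) :
    ((Finset.range n).filter (fun j => j < b)).card = b := by
  have h : (Finset.range n).filter (fun j => j < b) = Finset.range b := by
    ext x
    simp only [Finset.mem_filter, Finset.mem_range]
    omega
  rw [h, Finset.card_range]

lemma transm_KD {n k m : ℕ} (hk : 1 ≤ k) (hmn : k + m < n) (i : Fin n) :
    transm (KD n k m) i = (n : ℝ) - 1 + (if k + m ≤ (i : ℕ) then (m : ℝ) else 0) := by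
  unfold transm
  have hterm : ∀ j : Fin n, (ddist (KD n k m) i j : ℝ) =
      (1 - if i = j then (1:ℝ) else 0) +
      (if k + m ≤ (i : ℕ) then (if k ≤ (j : ℕ) ∧ (j : ℕ) < k + m then (1:ℝ) else 0) else 0) := by
    intro j
    rw [ddist_KD hk]
    by_cases hij : i = j
    · rw [if_pos hij, if_pos hij]
      by_cases hi : k + m ≤ (i : ℕ)
      · rw [if_pos hi, if_neg (by rw [hij] at hi; omega)]
        norm_num
      · rw [if_neg hi]; norm_num
    · rw [if_neg hij, if_neg hij]
      by_cases hi : k + m ≤ (i : ℕ)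
      · simp only [if_pos hi]
        by_cases hj : k ≤ (j : ℕ) ∧ (j : ℕ) < k + m
        · rw [if_pos ⟨hi, hj⟩, if_pos hj]; norm_num
        · rw [if_neg (by tauto), if_neg hj]; norm_num
      · rw [if_neg hi, if_neg (by tauto)]; norm_num
  rw [Finset.sum_congr rfl (fun j _ => hterm j), Finset.sum_add_distrib, Finset.sum_sub_distrib]
  have h1 : ∑ _j : Fin n, (1 : ℝ) = n := by simp
  have h2 : ∑ j : Fin n, (if i = j then (1:ℝ) else 0) = 1 := by
    simp [Finset.sum_ite_eq]
  have h3 : ∑ j : Fin n, (if k + m ≤ (i : ℕ) then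
      (if k ≤ (j : ℕ) ∧ (j : ℕ) < k + m then (1:ℝ) else 0) else 0)
      = if k + m ≤ (i : ℕ) then (m : ℝ) else 0 := by
    by_cases hi : k + m ≤ (i : ℕ)
    · simp only [if_pos hi]
      rw [sum_ind (fun j => k ≤ j ∧ j < k + m), card_window (by omega)]
      norm_num
    · simp [hi]
  rw [h1, h2, h3]

end Aux

theorem stmt11 {n k m : ℕ} (hk : 1 ≤ k) (hkn : k + 2 ≤ n) (hm : 1 ≤ m) (hmn : m + k + 1 ≤ n)
    (α : ℝ) (h0 : 0 ≤ α) (h1 : α < 1) :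
    mualpha α (KD n k m) =
      (α * m + α * n + n - 2 + Real.sqrt ((1 - α) ^ 2 * n ^ 2 +
        (2 * α ^ 2 - 6 * α + 4) * m * n + (α ^ 2 + 4 * α - 4) * m ^ 2 -
        4 * (1 - α) * k * m)) / 2 := by
  
  have hn0 : 0 < n := by omega
  have hkm : k + m < n := by omega
  have hk1 : (1:ℝ) ≤ (k:ℝ) := by exact_mod_cast hk
  have hm1 : (1:ℝ) ≤ (m:ℝ) := by exact_mod_cast hm
  have hc1 : (1:ℝ) ≤ (n:ℝ) - (k:ℝ) - (m:ℝ) := by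
    have h := (Nat.cast_le (α := ℝ)).2 hmn
    push_cast at h
    linarith
  have hb : (0:ℝ) < 1 - α := by linarith
  have hE0 : (0:ℝ) ≤ ((1 - α) ^ 2 * n ^ 2 +
        (2 * α ^ 2 - 6 * α + 4) * m * n + (α ^ 2 + 4 * α - 4) * m ^ 2 -
        4 * (1 - α) * k * m) := by
    nlinarith [sq_nonneg ((α * ((n:ℝ) - 1) + (1 - α) * ((k:ℝ) + (m:ℝ) - 1)) - (α * ((n:ℝ) - 1 + (m:ℝ)) + (1 - α) * ((n:ℝ) - (k:ℝ) - (m:ℝ) - 1))),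
      mul_nonneg (mul_nonneg hb.le (by linarith : (0:ℝ) ≤ (n:ℝ) - (k:ℝ) - (m:ℝ)))
        (mul_nonneg hb.le (by linarith : (0:ℝ) ≤ (k:ℝ) + 2 * (m:ℝ)))]
  have hsq : Real.sqrt ((1 - α) ^ 2 * n ^ 2 +
        (2 * α ^ 2 - 6 * α + 4) * m * n + (α ^ 2 + 4 * α - 4) * m ^ 2 -
        4 * (1 - α) * k * m) ^ 2 = ((1 - α) ^ 2 * n ^ 2 +
        (2 * α ^ 2 - 6 * α + 4) * m * n + (α ^ 2 + 4 * α - 4) * m ^ 2 -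
        4 * (1 - α) * k * m) := Real.sq_sqrt hE0
  have hapos : (0:ℝ) < ((1 - α) * ((n:ℝ) - (k:ℝ) - (m:ℝ))) := by nlinarith
  have hccpos : (0:ℝ) < (((α * m + α * n + n - 2 + Real.sqrt ((1 - α) ^ 2 * n ^ 2 +
        (2 * α ^ 2 - 6 * α + 4) * m * n + (α ^ 2 + 4 * α - 4) * m ^ 2 -
        4 * (1 - α) * k * m)) / 2) - (α * ((n:ℝ) - 1) + (1 - α) * ((k:ℝ) + (m:ℝ) - 1))) := by
    have habs : |(α * ((n:ℝ) - 1) + (1 - α) * ((k:ℝ) + (m:ℝ) - 1)) - (α * ((n:ℝ) - 1 + (m:ℝ)) + (1 - α) * ((n:ℝ) - (k:ℝ) - (m:ℝ) - 1))| < Real.sqrt ((1 - α) ^ 2 * n ^ 2 +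
        (2 * α ^ 2 - 6 * α + 4) * m * n + (α ^ 2 + 4 * α - 4) * m ^ 2 -
        4 * (1 - α) * k * m) := by
      rw [← Real.sqrt_sq_eq_abs]
      apply Real.sqrt_lt_sqrt (sq_nonneg _)
      nlinarith [mul_pos (mul_pos hb (by linarith : (0:ℝ) < (n:ℝ) - (k:ℝ) - (m:ℝ)))
        (mul_pos hb (by linarith : (0:ℝ) < (k:ℝ) + 2 * (m:ℝ)))]
    have h2 := le_abs_self ((α * ((n:ℝ) - 1) + (1 - α) * ((k:ℝ) + (m:ℝ) - 1)) - (α * ((n:ℝ) - 1 + (m:ℝ)) + (1 - α) * ((n:ℝ) - (k:ℝ) - (m:ℝ) - 1)))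
    linarith
  set v : Fin n → ℝ := fun j => if (j : ℕ) < k + m then ((1 - α) * ((n:ℝ) - (k:ℝ) - (m:ℝ))) else (((α * m + α * n + n - 2 + Real.sqrt ((1 - α) ^ 2 * n ^ 2 +
        (2 * α ^ 2 - 6 * α + 4) * m * n + (α ^ 2 + 4 * α - 4) * m ^ 2 -
        4 * (1 - α) * k * m)) / 2) - (α * ((n:ℝ) - 1) + (1 - α) * ((k:ℝ) + (m:ℝ) - 1))) with hv
  have hvpos : ∀ i, 0 < v i := by
    intro i
    rw [hv]
    dsimp only
    by_cases hi : (i : ℕ) < k + m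
    · rw [if_pos hi]; exact hapos
    · rw [if_neg hi]; exact hccpos
  have hDnn : ∀ i j, 0 ≤ Dalpha α (KD n k m) i j := by
    intro i j
    simp only [Dalpha, Matrix.add_apply, Matrix.smul_apply, smul_eq_mul, Matrix.of_apply]
    have h1 : 0 ≤ Matrix.diagonal (transm (KD n k m)) i j := by
      by_cases hij : i = j
      · subst hij
        rw [Matrix.diagonal_apply_eq, transm_KD hk hkm]
        have hn1 : (1:ℝ) ≤ (n:ℝ) := by exact_mod_cast hn0
        split_ifs <;> linarith
      · rw [Matrix.diagonal_apply_ne _ hij]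
    have h2 : (0:ℝ) ≤ (ddist (KD n k m) i j : ℝ) := Nat.cast_nonneg _
    exact add_nonneg (mul_nonneg h0 h1) (mul_nonneg hb.le h2)
  have hsum_v : ∑ j : Fin n, v j = (n:ℝ) * (((α * m + α * n + n - 2 + Real.sqrt ((1 - α) ^ 2 * n ^ 2 +
        (2 * α ^ 2 - 6 * α + 4) * m * n + (α ^ 2 + 4 * α - 4) * m ^ 2 -
        4 * (1 - α) * k * m)) / 2) - (α * ((n:ℝ) - 1) + (1 - α) * ((k:ℝ) + (m:ℝ) - 1))) + ((k:ℝ) + (m:ℝ)) * (((1 - α) * ((n:ℝ) - (k:ℝ) - (m:ℝ))) - (((α * m + α * n + n - 2 + Real.sqrt ((1 - α) ^ 2 * n ^ 2 +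
        (2 * α ^ 2 - 6 * α + 4) * m * n + (α ^ 2 + 4 * α - 4) * m ^ 2 -
        4 * (1 - α) * k * m)) / 2) - (α * ((n:ℝ) - 1) + (1 - α) * ((k:ℝ) + (m:ℝ) - 1)))) := by
    have hpt : ∀ j : Fin n, v j =
        (((α * m + α * n + n - 2 + Real.sqrt ((1 - α) ^ 2 * n ^ 2 +
        (2 * α ^ 2 - 6 * α + 4) * m * n + (α ^ 2 + 4 * α - 4) * m ^ 2 -
        4 * (1 - α) * k * m)) / 2) - (α * ((n:ℝ) - 1) + (1 - α) * ((k:ℝ) + (m:ℝ) - 1))) + (if ((j:ℕ) < k + m) then (1:ℝ) else 0) * (((1 - α) * ((n:ℝ) - (k:ℝ) - (m:ℝ))) - (((α * m + α * n + n - 2 + Real.sqrt ((1 - α) ^ 2 * n ^ 2 +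
        (2 * α ^ 2 - 6 * α + 4) * m * n + (α ^ 2 + 4 * α - 4) * m ^ 2 -
        4 * (1 - α) * k * m)) / 2) - (α * ((n:ℝ) - 1) + (1 - α) * ((k:ℝ) + (m:ℝ) - 1)))) := by
      intro j
      rw [hv]
      dsimp only
      split_ifs <;> ring
    rw [Finset.sum_congr rfl fun j _ => hpt j, Finset.sum_add_distrib]
    rw [← Finset.sum_mul, sum_ind (fun j => j < k + m), card_lt (le_of_lt hkm)]
    rw [Finset.sum_const, Finset.card_univ, Fintype.card_fin]
    push_cast
    ring
  have hsum_ind2 : ∀ i : Fin n, (∑ j : Fin n, (if k + m ≤ (i:ℕ) then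
      (if k ≤ (j:ℕ) ∧ (j:ℕ) < k + m then (1:ℝ) else 0) else 0) * ((1 - α) * ((n:ℝ) - (k:ℝ) - (m:ℝ))))
      = (if k + m ≤ (i:ℕ) then (m:ℝ) else 0) * ((1 - α) * ((n:ℝ) - (k:ℝ) - (m:ℝ))) := by
    intro i
    by_cases hi : k + m ≤ (i:ℕ)
    · simp only [if_pos hi]
      rw [← Finset.sum_mul, sum_ind (fun j => k ≤ j ∧ j < k + m), card_window (le_of_lt hkm)]
      have hmm : k + m - k = m := by omega
      rw [hmm]
    · simp [hi]
  have hterm : ∀ i j : Fin n, (ddist (KD n k m) i j : ℝ) * v j =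
      (v j - (if i = j then v j else 0)) +
      (if k + m ≤ (i:ℕ) then (if k ≤ (j:ℕ) ∧ (j:ℕ) < k + m then (1:ℝ) else 0) else 0) * ((1 - α) * ((n:ℝ) - (k:ℝ) - (m:ℝ))) := by
    intro i j
    rw [ddist_KD hk]
    by_cases hij : i = j
    · rw [if_pos hij, if_pos hij]
      by_cases hi : k + m ≤ (i:ℕ)
      · rw [if_pos hi, if_neg (by rw [hij] at hi; omega)]
        push_cast
        ring
      · rw [if_neg hi]
        push_cast
        ring
    · rw [if_neg hij, if_neg hij]
      by_cases hi : k + m ≤ (i:ℕ)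
      · rw [if_pos hi]
        by_cases hj : k ≤ (j:ℕ) ∧ (j:ℕ) < k + m
        · rw [if_pos ⟨hi, hj⟩, if_pos hj]
          have hvj : v j = ((1 - α) * ((n:ℝ) - (k:ℝ) - (m:ℝ))) := by
            rw [hv]; dsimp only; rw [if_pos hj.2]
          rw [hvj]
          push_cast
          ring
        · rw [if_neg (by tauto), if_neg hj]
          push_cast
          ring
      · rw [if_neg hi, if_neg (by tauto)]
        push_cast
        ring
  have hrowval : ∀ i : Fin n, (Dalpha α (KD n k m)).mulVec v i =
      α * (transm (KD n k m) i * v i) + (1 - α) *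
        (((n:ℝ) * (((α * m + α * n + n - 2 + Real.sqrt ((1 - α) ^ 2 * n ^ 2 +
        (2 * α ^ 2 - 6 * α + 4) * m * n + (α ^ 2 + 4 * α - 4) * m ^ 2 -
        4 * (1 - α) * k * m)) / 2) - (α * ((n:ℝ) - 1) + (1 - α) * ((k:ℝ) + (m:ℝ) - 1))) + ((k:ℝ) + (m:ℝ)) * (((1 - α) * ((n:ℝ) - (k:ℝ) - (m:ℝ))) - (((α * m + α * n + n - 2 + Real.sqrt ((1 - α) ^ 2 * n ^ 2 +
        (2 * α ^ 2 - 6 * α + 4) * m * n + (α ^ 2 + 4 * α - 4) * m ^ 2 -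
        4 * (1 - α) * k * m)) / 2) - (α * ((n:ℝ) - 1) + (1 - α) * ((k:ℝ) + (m:ℝ) - 1))))) - v i +
          (if k + m ≤ (i:ℕ) then (m:ℝ) else 0) * ((1 - α) * ((n:ℝ) - (k:ℝ) - (m:ℝ)))) := by
    intro i
    have h1 : (Dalpha α (KD n k m)).mulVec v i =
        α * (transm (KD n k m) i * v i) +
          (1 - α) * (∑ j, (ddist (KD n k m) i j : ℝ) * v j) := by
      have hsplit : (Dalpha α (KD n k m)).mulVec v =
          α • ((Matrix.diagonal (transm (KD n k m))).mulVec v) +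
          (1 - α) • ((Matrix.of fun i j => ((ddist (KD n k m) i j : ℝ))).mulVec v) := by
        rw [Dalpha, Matrix.add_mulVec, Matrix.smul_mulVec, Matrix.smul_mulVec]
      rw [hsplit]
      simp only [Pi.add_apply, Pi.smul_apply, smul_eq_mul, Matrix.mulVec_diagonal]
      simp only [Matrix.mulVec, dotProduct, Matrix.of_apply]
    rw [h1]
    congr 1
    congr 1
    rw [Finset.sum_congr rfl fun j _ => hterm i j, Finset.sum_add_distrib,
        Finset.sum_sub_distrib, hsum_v, hsum_ind2 i]
    have hvi : ∑ j : Fin n, (if i = j then v j else 0) = v i := by simp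
    rw [hvi]
  have hMu : (Dalpha α (KD n k m)).mulVec v = ((α * m + α * n + n - 2 + Real.sqrt ((1 - α) ^ 2 * n ^ 2 +
        (2 * α ^ 2 - 6 * α + 4) * m * n + (α ^ 2 + 4 * α - 4) * m ^ 2 -
        4 * (1 - α) * k * m)) / 2) • v := by
    funext i
    rw [hrowval i, transm_KD hk hkm, Pi.smul_apply, smul_eq_mul]
    by_cases hi : k + m ≤ (i:ℕ)
    · rw [if_pos hi]
      have hvi : v i = (((α * m + α * n + n - 2 + Real.sqrt ((1 - α) ^ 2 * n ^ 2 +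
        (2 * α ^ 2 - 6 * α + 4) * m * n + (α ^ 2 + 4 * α - 4) * m ^ 2 -
        4 * (1 - α) * k * m)) / 2) - (α * ((n:ℝ) - 1) + (1 - α) * ((k:ℝ) + (m:ℝ) - 1))) := by
        rw [hv]; dsimp only; rw [if_neg (by omega)]
      rw [hvi]
      linear_combination (-(1/4) : ℝ) * hsq
    · rw [if_neg hi]
      have hvi : v i = ((1 - α) * ((n:ℝ) - (k:ℝ) - (m:ℝ))) := by
        rw [hv]; dsimp only; rw [if_pos (by omega)]
      rw [hvi]
      ring
  exact specRad_eq_of_posEig hn0 (Dalpha α (KD n k m)) hDnn v hvpos ((α * m + α * n + n - 2 + Real.sqrt ((1 - α) ^ 2 * n ^ 2 +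
        (2 * α ^ 2 - 6 * α + 4) * m * n + (α ^ 2 + 4 * α - 4) * m ^ 2 -
        4 * (1 - α) * k * m)) / 2) hMu
end

section
/- For α = 0 and integers 1 ≤ k ≤ n-2, μ_0(K(n,k,1)) = μ_0(K(n,k,n-k-1)) = (n - 2 + sqrt(n² + 4n - 4k - 4))/2. -/
open Matrix BigOperators

section Helpers

lemma spec_iff {n : ℕ} (M : Matrix (Fin n) (Fin n) ℝ) (lam : ℂ) :
    lam ∈ spectrum ℂ (M.map (fun x => (x : ℂ))) ↔
      ∃ x : Fin n → ℂ, x ≠ 0 ∧ (M.map (fun x => (x : ℂ))).mulVec x = lam • x := by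
  set M' := M.map (fun x => (x : ℂ))
  rw [spectrum.mem_iff, Matrix.isUnit_iff_isUnit_det, isUnit_iff_ne_zero, not_not,
    ← Matrix.exists_mulVec_eq_zero_iff]
  constructor
  · rintro ⟨x, hx, hx0⟩
    refine ⟨x, hx, ?_⟩
    rw [Algebra.algebraMap_eq_smul_one, Matrix.sub_mulVec, Matrix.smul_mulVec,
      Matrix.one_mulVec, sub_eq_zero] at hx0
    exact hx0.symm
  · rintro ⟨x, hx, hx0⟩
    refine ⟨x, hx, ?_⟩
    rw [Algebra.algebraMap_eq_smul_one, Matrix.sub_mulVec, Matrix.smul_mulVec,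
      Matrix.one_mulVec, sub_eq_zero]
    exact hx0.symm

lemma specRad_eq_of_perron {n : ℕ} (hn : 0 < n) (M : Matrix (Fin n) (Fin n) ℝ)
    (hM : ∀ i j, 0 ≤ M i j) (v : Fin n → ℝ) (hv : ∀ i, 0 < v i) (μ : ℝ) (hμ : 0 ≤ μ)
    (heig : M.mulVec v = μ • v) : specRad M = μ := by
  set M' := M.map (fun x => (x : ℂ)) with hM'def
  set S := {r : ℝ | ∃ lam ∈ spectrum ℂ M', r = ‖lam‖} with hS
  have i₀ : Fin n := ⟨0, hn⟩
  have hmem : (μ : ℂ) ∈ spectrum ℂ M' := by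
    rw [spec_iff]
    refine ⟨fun i => (v i : ℂ), ?_, ?_⟩
    · intro h
      have := congrFun h i₀
      simp only [Pi.zero_apply, Complex.ofReal_eq_zero] at this
      exact (hv i₀).ne' this
    · funext i
      have hre := congrFun heig i
      simp only [Matrix.mulVec, dotProduct, Pi.smul_apply, smul_eq_mul] at hre ⊢
      simp only [Matrix.map_apply]
      exact_mod_cast congrArg (fun r : ℝ => (r : ℂ)) hre
  have hμS : μ ∈ S := ⟨(μ : ℂ), hmem, by rw [Complex.norm_real, Real.norm_eq_abs, abs_of_nonneg hμ]⟩
  have hub : ∀ r ∈ S, r ≤ μ := by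
    rintro r ⟨lam, hlam, rfl⟩
    rw [spec_iff] at hlam
    obtain ⟨x, hx, hxeq⟩ := hlam
    obtain ⟨i, -, hmax⟩ := Finset.exists_max_image Finset.univ
      (fun j => ‖x j‖ / v j) ⟨i₀, Finset.mem_univ _⟩
    have hxi : 0 < ‖x i‖ := by
      obtain ⟨j, hj⟩ := Function.ne_iff.mp hx
      have h1 : 0 < ‖x j‖ / v j := div_pos (by simpa using hj) (hv j)
      have h2 : 0 < ‖x i‖ / v i := lt_of_lt_of_le h1 (hmax j (Finset.mem_univ _))
      by_contra hcon
      push_neg at hcon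
      have h0 : ‖x i‖ = 0 := le_antisymm hcon (norm_nonneg _)
      rw [h0, zero_div] at h2
      exact lt_irrefl 0 h2
    have hle : ∀ j, ‖x j‖ ≤ ‖x i‖ / v i * v j := by
      intro j
      have := hmax j (Finset.mem_univ _)
      rw [div_le_div_iff₀ (hv j) (hv i)] at this
      rw [div_mul_eq_mul_div, le_div_iff₀ (hv i)]
      linarith
    have key : ‖lam‖ * ‖x i‖ ≤ μ * ‖x i‖ := by
      have e1 : ‖lam‖ * ‖x i‖ = ‖(M'.mulVec x) i‖ := by
        rw [hxeq]; simp [norm_mul]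
      rw [e1]
      have e2 : (M'.mulVec x) i = ∑ j, (M i j : ℂ) * x j := by
        simp [Matrix.mulVec, dotProduct, hM'def, Matrix.map_apply]
      rw [e2]
      calc ‖∑ j, (M i j : ℂ) * x j‖
          ≤ ∑ j, ‖(M i j : ℂ) * x j‖ := norm_sum_le _ _
        _ = ∑ j, M i j * ‖x j‖ := by
            refine Finset.sum_congr rfl fun j _ => ?_
            rw [norm_mul, Complex.norm_real, Real.norm_eq_abs, abs_of_nonneg (hM i j)]
        _ ≤ ∑ j, M i j * (‖x i‖ / v i * v j) := by
            refine Finset.sum_le_sum fun j _ => ?_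
            exact mul_le_mul_of_nonneg_left (hle j) (hM i j)
        _ = ‖x i‖ / v i * ∑ j, M i j * v j := by
            rw [Finset.mul_sum]; refine Finset.sum_congr rfl fun j _ => by ring
        _ = ‖x i‖ / v i * (μ * v i) := by
            have := congrFun heig i
            simp only [Matrix.mulVec, dotProduct, Pi.smul_apply, smul_eq_mul] at this
            rw [this]
        _ = μ * ‖x i‖ := by
            have hne : v i ≠ 0 := (hv i).ne'
            field_simp
    exact le_of_mul_le_mul_right key hxi
  have hbdd : BddAbove S := ⟨μ, hub⟩
  exact le_antisymm (csSup_le ⟨μ, hμS⟩ hub) (le_csSup hbdd hμS)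

lemma dwalk_zero {n : ℕ} {G : Digraph (Fin n)} {i j : Fin n} : DWalk G i j 0 ↔ i = j := by
  constructor
  · rintro ⟨f, h0, hk, -⟩; rw [← h0, hk]
  · rintro rfl; exact ⟨fun _ => i, rfl, rfl, fun l hl => absurd hl (Nat.not_lt_zero l)⟩

lemma dwalk_one {n : ℕ} {G : Digraph (Fin n)} {i j : Fin n} : DWalk G i j 1 ↔ G.Adj i j := by
  constructor
  · rintro ⟨f, h0, hk, hadj⟩
    have := hadj 0 (by omega)
    rwa [h0, hk] at this
  · intro h
    refine ⟨fun l => if l = 0 then i else j, by simp, by simp, fun l hl => ?_⟩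
    interval_cases l
    simpa using h

lemma sum_if_lt {n c : ℕ} (hc : c ≤ n) (a d : ℝ) :
    ∑ j : Fin n, (if (j : ℕ) < c then a else d) = c * a + ((n : ℝ) - c) * d := by
  rw [Fin.sum_univ_eq_sum_range (fun j => if j < c then a else d) n]
  rw [Finset.range_eq_Ico, ← Finset.sum_Ico_consecutive _ (Nat.zero_le c) hc]
  rw [← Finset.range_eq_Ico]
  have h1 : ∑ j ∈ Finset.range c, (if j < c then a else d) = c * a := by
    rw [Finset.sum_congr rfl fun j hj => if_pos (Finset.mem_range.mp hj)]
    simp [mul_comm]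
  have h2 : ∑ j ∈ Finset.Ico c n, (if j < c then a else d) = ((n : ℝ) - c) * d := by
    rw [Finset.sum_congr rfl fun j hj => if_neg (by have := (Finset.mem_Ico.mp hj).1; omega)]
    rw [Finset.sum_const, Nat.card_Ico, nsmul_eq_mul]
    rw [Nat.cast_sub hc]
  rw [h1, h2]

lemma sum_if_mem {n c1 c2 : ℕ} (h1 : c1 ≤ c2) (h2 : c2 ≤ n) (a : ℝ) :
    ∑ j : Fin n, (if c1 ≤ (j : ℕ) ∧ (j : ℕ) < c2 then a else 0) = ((c2 : ℝ) - c1) * a := by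
  rw [Fin.sum_univ_eq_sum_range (fun j => if c1 ≤ j ∧ j < c2 then a else 0) n]
  rw [Finset.range_eq_Ico, ← Finset.sum_Ico_consecutive _ (Nat.zero_le c2) h2,
    ← Finset.sum_Ico_consecutive _ (Nat.zero_le c1) h1]
  have e1 : ∑ j ∈ Finset.Ico 0 c1, (if c1 ≤ j ∧ j < c2 then a else 0) = 0 := by
    rw [Finset.sum_congr rfl fun j hj => if_neg (by have := (Finset.mem_Ico.mp hj).2; omega)]
    simp
  have e2 : ∑ j ∈ Finset.Ico c1 c2, (if c1 ≤ j ∧ j < c2 then a else 0) = ((c2 : ℝ) - c1) * a := by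
    rw [Finset.sum_congr rfl fun j hj =>
      if_pos (⟨(Finset.mem_Ico.mp hj).1, (Finset.mem_Ico.mp hj).2⟩)]
    rw [Finset.sum_const, Nat.card_Ico, nsmul_eq_mul, Nat.cast_sub h1]
  have e3 : ∑ j ∈ Finset.Ico c2 n, (if c1 ≤ j ∧ j < c2 then a else 0) = 0 := by
    rw [Finset.sum_congr rfl fun j hj => if_neg (by have := (Finset.mem_Ico.mp hj).1; omega)]
    simp
  rw [e1, e2, e3]; ring

lemma sum_if_eq {n c : ℕ} (hc : c < n) (v : Fin n → ℝ) :
    ∑ j : Fin n, (if (j : ℕ) = c then v j else 0) = v ⟨c, hc⟩ := by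
  have h : ∀ j : Fin n, ((j : ℕ) = c) = (j = ⟨c, hc⟩) := by
    intro j; simp [Fin.ext_iff]
  simp_rw [h]
  rw [Finset.sum_ite_eq' Finset.univ (⟨c, hc⟩ : Fin n) v]
  simp

end Helpers

theorem stmt13 {n k : ℕ} (hk : 1 ≤ k) (hkn : k + 2 ≤ n) :
    mualpha 0 (KD n k 1) =
      ((n : ℝ) - 2 + Real.sqrt ((n : ℝ) ^ 2 + 4 * n - 4 * k - 4)) / 2 ∧
    mualpha 0 (KD n k (n - k - 1)) =
      ((n : ℝ) - 2 + Real.sqrt ((n : ℝ) ^ 2 + 4 * n - 4 * k - 4)) / 2 := by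
  have hn : 0 < n := by omega
  have hkr : (k : ℝ) + 2 ≤ n := by exact_mod_cast hkn
  have hkr1 : (1 : ℝ) ≤ k := by exact_mod_cast hk
  set s : ℝ := (n : ℝ) ^ 2 + 4 * n - 4 * k - 4 with hsdef
  have hs0 : 0 ≤ s := by nlinarith
  set μ : ℝ := ((n : ℝ) - 2 + Real.sqrt s) / 2 with hμdef
  have hsq : Real.sqrt s ^ 2 = s := Real.sq_sqrt hs0
  have hsqnn : 0 ≤ Real.sqrt s := Real.sqrt_nonneg s
  have hquad : μ ^ 2 = ((n : ℝ) - 2) * μ + (2 * n - k - 2) := by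
    rw [hμdef]; field_simp; nlinarith [hsq]
  have hgt : (n : ℝ) - 2 < μ := by
    have h1 : ((n : ℝ) - 2) ^ 2 < s := by nlinarith
    have h2 : (n : ℝ) - 2 < Real.sqrt s := by
      nlinarith [Real.sq_sqrt hs0, Real.sqrt_nonneg s]
    rw [hμdef]; linarith
  have hμpos : 0 < μ := by linarith
  constructor
  · -- case m = 1
    have hD : Dalpha 0 (KD n k 1) = Matrix.of (fun i j : Fin n =>
        if i = j then (0 : ℝ)
        else if k + 1 ≤ (i : ℕ) ∧ k ≤ (j : ℕ) ∧ (j : ℕ) < k + 1 then 2 else 1) := by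
      funext i j
      simp only [Dalpha, zero_smul, sub_zero, one_smul, zero_add, Matrix.add_apply,
        Matrix.of_apply]
      rw [ddist_KD hk]
      split_ifs <;> norm_num
    show specRad (Dalpha 0 (KD n k 1)) = μ
    rw [hD]
    set v : Fin n → ℝ := fun j => if (j : ℕ) < k + 1 then ((n : ℝ) - k - 1) else (μ - k)
      with hvdef
    have hv : ∀ i, 0 < v i := by
      intro i; rw [hvdef]; dsimp only; split_ifs
      · linarith
      · linarith
    refine specRad_eq_of_perron hn _ ?_ v hv μ hμpos.le ?_
    · intro i j; dsimp only [Matrix.of_apply]; split_ifs <;> norm_num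
    · funext i
      simp only [Matrix.mulVec, dotProduct, Pi.smul_apply, smul_eq_mul, Matrix.of_apply]
      have hsplit : ∀ j : Fin n,
          (if i = j then (0 : ℝ)
            else if k + 1 ≤ (i : ℕ) ∧ k ≤ (j : ℕ) ∧ (j : ℕ) < k + 1 then 2 else 1) * v j
          = v j - (if (j : ℕ) = (i : ℕ) then v j else 0)
            + (if k + 1 ≤ (i : ℕ) ∧ (j : ℕ) = k then v j else 0) := by
        intro j
        have hij : (i = j) ↔ ((i : ℕ) = (j : ℕ)) := Fin.ext_iff
        by_cases h1 : i = j
        · rw [if_pos h1]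
          have hji : (j : ℕ) = (i : ℕ) := (hij.mp h1).symm
          rw [if_pos hji]
          have : ¬(k + 1 ≤ (i : ℕ) ∧ (j : ℕ) = k) := by omega
          rw [if_neg this]; ring
        · rw [if_neg h1]
          have hji : ¬((j : ℕ) = (i : ℕ)) := fun h => h1 (hij.mpr h.symm)
          rw [if_neg hji]
          by_cases h2 : k + 1 ≤ (i : ℕ) ∧ k ≤ (j : ℕ) ∧ (j : ℕ) < k + 1
          · rw [if_pos h2, if_pos (by omega : k + 1 ≤ (i : ℕ) ∧ (j : ℕ) = k)]; ring
          · rw [if_neg h2, if_neg (by omega : ¬(k + 1 ≤ (i : ℕ) ∧ (j : ℕ) = k))]; ring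
      rw [Finset.sum_congr rfl (fun j _ => hsplit j)]
      rw [Finset.sum_add_distrib, Finset.sum_sub_distrib]
      have e1 : ∑ j : Fin n, v j = ((k : ℝ) + 1) * ((n : ℝ) - k - 1)
          + ((n : ℝ) - (k + 1)) * (μ - k) := by
        rw [hvdef]
        rw [sum_if_lt (by omega : k + 1 ≤ n)]
        push_cast
        ring
      have e2 : ∑ j : Fin n, (if (j : ℕ) = (i : ℕ) then v j else 0) = v i := by
        rw [sum_if_eq i.isLt]
      have hkltn : k < n := by omega
      rw [e1, e2]
      by_cases hik : k + 1 ≤ (i : ℕ)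
      · have e3 : ∑ j : Fin n, (if k + 1 ≤ (i : ℕ) ∧ (j : ℕ) = k then v j else 0)
            = (n : ℝ) - k - 1 := by
          simp only [hik, true_and]
          rw [sum_if_eq hkltn]
          rw [hvdef]; simp
        rw [e3]
        have hvi : v i = μ - k := by rw [hvdef]; simp only; rw [if_neg (by omega)]
        rw [hvi]
        linear_combination hquad - (1/2) * hsq
      · have e3 : ∑ j : Fin n, (if k + 1 ≤ (i : ℕ) ∧ (j : ℕ) = k then v j else 0) = 0 := by
          simp only [hik, false_and, if_false, Finset.sum_const_zero]
        rw [e3]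
        have hvi : v i = (n : ℝ) - k - 1 := by rw [hvdef]; simp only; rw [if_pos (by omega)]
        rw [hvi]
        ring
  · -- case m = n - k - 1
    have hkm : k + (n - k - 1) = n - 1 := by omega
    have hD : Dalpha 0 (KD n k (n - k - 1)) = Matrix.of (fun i j : Fin n =>
        if i = j then (0 : ℝ)
        else if k + (n - k - 1) ≤ (i : ℕ) ∧ k ≤ (j : ℕ) ∧ (j : ℕ) < k + (n - k - 1)
          then 2 else 1) := by
      funext i j
      simp only [Dalpha, zero_smul, sub_zero, one_smul, zero_add, Matrix.add_apply,
        Matrix.of_apply]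
      rw [ddist_KD hk]
      split_ifs <;> norm_num
    show specRad (Dalpha 0 (KD n k (n - k - 1))) = μ
    rw [hD]
    set v : Fin n → ℝ := fun j => if (j : ℕ) < n - 1 then (1 : ℝ) else (μ - n + 2)
      with hvdef
    have hv : ∀ i, 0 < v i := by
      intro i; rw [hvdef]; dsimp only; split_ifs
      · norm_num
      · linarith
    refine specRad_eq_of_perron hn _ ?_ v hv μ hμpos.le ?_
    · intro i j; dsimp only [Matrix.of_apply]; split_ifs <;> norm_num
    · funext i
      have hi := i.isLt
      simp only [Matrix.mulVec, dotProduct, Pi.smul_apply, smul_eq_mul, Matrix.of_apply]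
      have hsplit : ∀ j : Fin n,
          (if i = j then (0 : ℝ)
            else if k + (n - k - 1) ≤ (i : ℕ) ∧ k ≤ (j : ℕ) ∧ (j : ℕ) < k + (n - k - 1)
              then 2 else 1) * v j
          = v j - (if (j : ℕ) = (i : ℕ) then v j else 0)
            + (if (i : ℕ) = n - 1 ∧ k ≤ (j : ℕ) ∧ (j : ℕ) < n - 1 then 1 else 0) := by
        intro j
        have hj := j.isLt
        have hij : (i = j) ↔ ((i : ℕ) = (j : ℕ)) := Fin.ext_iff
        have hvj1 : (j : ℕ) < n - 1 → v j = 1 := by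
          intro h; rw [hvdef]; simp only; rw [if_pos h]
        by_cases h1 : i = j
        · rw [if_pos h1]
          have hji : (j : ℕ) = (i : ℕ) := (hij.mp h1).symm
          rw [if_pos hji]
          have : ¬((i : ℕ) = n - 1 ∧ k ≤ (j : ℕ) ∧ (j : ℕ) < n - 1) := by omega
          rw [if_neg this]; ring
        · rw [if_neg h1]
          have hji : ¬((j : ℕ) = (i : ℕ)) := fun h => h1 (hij.mpr h.symm)
          rw [if_neg hji]
          by_cases h2 : k + (n - k - 1) ≤ (i : ℕ) ∧ k ≤ (j : ℕ) ∧ (j : ℕ) < k + (n - k - 1)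
          · rw [if_pos h2, if_pos (by omega : (i : ℕ) = n - 1 ∧ k ≤ (j : ℕ) ∧ (j : ℕ) < n - 1)]
            rw [hvj1 (by omega)]; ring
          · rw [if_neg h2,
              if_neg (by omega : ¬((i : ℕ) = n - 1 ∧ k ≤ (j : ℕ) ∧ (j : ℕ) < n - 1))]; ring
      rw [Finset.sum_congr rfl (fun j _ => hsplit j)]
      rw [Finset.sum_add_distrib, Finset.sum_sub_distrib]
      have hcast1 : ((n - 1 : ℕ) : ℝ) = (n : ℝ) - 1 := by
        rw [Nat.cast_sub (by omega)]; norm_num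
      have e1 : ∑ j : Fin n, v j = ((n : ℝ) - 1) * 1 + (μ - n + 2) := by
        rw [hvdef]
        rw [sum_if_lt (by omega : n - 1 ≤ n)]
        rw [hcast1]
        ring
      have e2 : ∑ j : Fin n, (if (j : ℕ) = (i : ℕ) then v j else 0) = v i := by
        rw [sum_if_eq i.isLt]
      rw [e1, e2]
      by_cases hin : (i : ℕ) = n - 1
      · have e3 : ∑ j : Fin n, (if (i : ℕ) = n - 1 ∧ k ≤ (j : ℕ) ∧ (j : ℕ) < n - 1
            then (1 : ℝ) else 0) = ((n : ℝ) - 1) - k := by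
          simp only [hin, true_and]
          rw [sum_if_mem (by omega : k ≤ n - 1) (by omega : n - 1 ≤ n)]
          rw [hcast1]; ring
        rw [e3]
        have hvi : v i = μ - n + 2 := by rw [hvdef]; simp only; rw [if_neg (by omega)]
        rw [hvi]
        linear_combination hquad - (1/2) * hsq
      · have e3 : ∑ j : Fin n, (if (i : ℕ) = n - 1 ∧ k ≤ (j : ℕ) ∧ (j : ℕ) < n - 1
            then (1 : ℝ) else 0) = 0 := by
          simp only [hin, false_and, if_false, Finset.sum_const_zero]
        rw [e3]
        have hvi : v i = 1 := by rw [hvdef]; simp only; rw [if_pos (by omega)]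
        rw [hvi]
        ring
end
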